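/- arXiv:1710.05143 — 10 statements merged into one kernel-verified Lean document; each statement's English description precedes it below -/
import Mathlib

section
/- Let A, B be positive invertible bounded operators on a complex Hilbert space H such that m·1_H ≤ 1_H ≤ A^(−1/2) B A^(−1/2) ≤ M·1_H for real scalars 0 < m ≤ 1 ≤ M, and let Φ be a unital positive linear map on B(H). Then for every p with −1 ≤ p ≤ 1 and p ≠ 0, T_p(Φ(A)|Φ(B)) ≤ Φ(T_p(A|B)) + (m^(p−1) − M^(p−1))·Φ(B − A). -/
open scoped NNReal

variable {H : Type*} [NormedAddCommGroup H] [InnerProductSpace ℂ H] [CompleteSpace H]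

/-- The weighted operator geometric mean `A ♮ₚ B = A^(1/2) (A^(-1/2) B A^(-1/2))^p A^(1/2)`,
operator powers being taken in the continuous functional calculus. -/
noncomputable def geomMean (A B : H →L[ℂ] H) (p : ℝ) : H →L[ℂ] H :=
  A ^ ((1 : ℝ) / 2) * ((A ^ (-(1 : ℝ) / 2)) * B * (A ^ (-(1 : ℝ) / 2))) ^ p * A ^ ((1 : ℝ) / 2)

/-- The Tsallis relative operator entropy `T_p(A|B) = (A ♮ₚ B - A) / p`. -/
noncomputable def tsallis (A B : H →L[ℂ] H) (p : ℝ) : H →L[ℂ] H :=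
  p⁻¹ • (geomMean A B p - A)

/-! ### Scalar inequalities -/

/-- The key scalar inequality: `(t^p - 1)/p ≤ t - 1` for `t > 0` and `p ∈ [-1,1] \ {0}`. -/
lemma sc_key {p : ℝ} (hp1 : -1 ≤ p) (hp2 : p ≤ 1) (hp0 : p ≠ 0) {t : ℝ} (ht : 0 < t) :
    p⁻¹ * (t ^ p - 1) ≤ t - 1 := by
  have hs : (-1 : ℝ) ≤ t - 1 := by linarith
  have hts : (1 : ℝ) + (t - 1) = t := by ring
  rcases lt_or_gt_of_ne hp0 with hneg | hpos
  · -- p < 0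
    have hq0 : (0 : ℝ) ≤ -p := by linarith
    have hq1 : -p ≤ 1 := by linarith
    have hb : t ^ (-p) ≤ 1 + (-p) * (t - 1) := by
      have := rpow_one_add_le_one_add_mul_self hs hq0 hq1
      rwa [hts] at this
    have hpos1 : 0 < 1 + (-p) * (t - 1) := by
      rcases le_or_gt 1 t with h | h
      · nlinarith
      · nlinarith
    have htq : 0 < t ^ (-p) := Real.rpow_pos_of_pos ht _
    have htp : t ^ p = (t ^ (-p))⁻¹ := by
      rw [← Real.rpow_neg ht.le, neg_neg]
    have h1 : (1 + (-p) * (t - 1))⁻¹ ≤ t ^ p := by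
      rw [htp]
      exact inv_anti₀ htq hb
    have h2 : 1 + p * (t - 1) ≤ (1 + (-p) * (t - 1))⁻¹ := by
      rw [inv_eq_one_div, le_div_iff₀ hpos1]
      nlinarith [sq_nonneg (p * (t - 1))]
    have hkey : 1 + p * (t - 1) ≤ t ^ p := h2.trans h1
    have hpinv : p⁻¹ < 0 := inv_neg''.mpr hneg
    have h3 := mul_le_mul_of_nonpos_left hkey hpinv.le
    have h4 : p⁻¹ * (1 + p * (t - 1)) = p⁻¹ + (t - 1) := by
      rw [mul_add, ← mul_assoc, inv_mul_cancel₀ hp0, one_mul, mul_one]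
    rw [h4] at h3
    linarith [h3]
  · -- 0 < p
    have hb : t ^ p ≤ 1 + p * (t - 1) := by
      have := rpow_one_add_le_one_add_mul_self hs hpos.le hp2
      rwa [hts] at this
    have hpinv : 0 < p⁻¹ := inv_pos.mpr hpos
    have h3 := mul_le_mul_of_nonneg_left hb hpinv.le
    have h4 : p⁻¹ * (1 + p * (t - 1)) = p⁻¹ + (t - 1) := by
      rw [mul_add, ← mul_assoc, inv_mul_cancel₀ hp0, one_mul, mul_one]
    rw [h4] at h3
    linarith [h3]

lemma sc_low {p m : ℝ} (hp1 : -1 ≤ p) (hp2 : p ≤ 1) (hp0 : p ≠ 0)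
    (hm : 0 < m) (hm1 : m ≤ 1) {t : ℝ} (h1t : 1 ≤ t) :
    p⁻¹ * (t ^ p - 1) ≤ m ^ (p - 1) * (t - 1) := by
  have h1 : (1 : ℝ) ≤ m ^ (p - 1) :=
    Real.one_le_rpow_of_pos_of_le_one_of_nonpos hm hm1 (by linarith)
  have hk := sc_key hp1 hp2 hp0 (t := t) (by linarith)
  nlinarith [sub_nonneg.mpr h1t]

lemma sc_up {p M : ℝ} (hp1 : -1 ≤ p) (hp2 : p ≤ 1) (hp0 : p ≠ 0)
    {t : ℝ} (h1t : 1 ≤ t) (htM : t ≤ M) :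
    M ^ (p - 1) * (t - 1) ≤ p⁻¹ * (t ^ p - 1) := by
  have ht0 : (0 : ℝ) < t := by linarith
  have key := sc_key hp1 hp2 hp0 (t := t⁻¹) (inv_pos.mpr ht0)
  have htp : (0 : ℝ) < t ^ p := Real.rpow_pos_of_pos ht0 _
  have e : (t⁻¹) ^ p = (t ^ p)⁻¹ := Real.inv_rpow ht0.le p
  rw [e] at key
  have h5 := mul_le_mul_of_nonneg_left key htp.le
  have eL : t ^ p * (p⁻¹ * ((t ^ p)⁻¹ - 1)) = p⁻¹ * (1 - t ^ p) := by
    field_simp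
  have eR : t ^ p * (t⁻¹ - 1) = t ^ (p - 1) - t ^ p := by
    rw [mul_sub, mul_one]
    congr 1
    rw [show t⁻¹ = t ^ (-1 : ℝ) by rw [Real.rpow_neg_one], ← Real.rpow_add ht0]
    ring_nf
  rw [eL, eR] at h5
  have e2 : t ^ (p - 1) * t = t ^ p := by
    rw [← Real.rpow_add_one (ne_of_gt ht0) (p - 1)]
    ring_nf
  have h1 : t ^ (p - 1) * (t - 1) ≤ p⁻¹ * (t ^ p - 1) := by nlinarith [e2, h5]
  have h2 : M ^ (p - 1) ≤ t ^ (p - 1) :=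
    Real.rpow_le_rpow_of_nonpos ht0 htM (by linarith)
  exact (mul_le_mul_of_nonneg_right h2 (sub_nonneg.mpr h1t)).trans h1

/-! ### Operator inequalities via cfc -/

section OpIneq

variable {H : Type*} [NormedAddCommGroup H] [InnerProductSpace ℂ H] [CompleteSpace H]

lemma zero_le_one_op : (0 : H →L[ℂ] H) ≤ 1 := by
  simpa using star_mul_self_nonneg (1 : H →L[ℂ] H)

lemma op_cfc_facts {X : H →L[ℂ] H} {M : ℝ} (hX1 : 1 ≤ X) (hXM : X ≤ M • 1) (p : ℝ) :
    (∀ x ∈ spectrum ℝ X, 1 ≤ x ∧ x ≤ M) ∧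
      X ^ p = cfc (fun x : ℝ => x ^ p) X := by
  have hX0 : (0 : H →L[ℂ] H) ≤ X := zero_le_one_op.trans hX1
  have hsa : IsSelfAdjoint X := .of_nonneg hX0
  have hspec1 : ∀ x ∈ spectrum ℝ X, 1 ≤ x := (CFC.one_le_iff X).mp hX1
  have hspecM : ∀ x ∈ spectrum ℝ X, x ≤ M := by
    refine (le_algebraMap_iff_spectrum_le (r := M) (a := X)).mp ?_
    rwa [Algebra.algebraMap_eq_smul_one]
  refine ⟨fun x hx => ⟨hspec1 x hx, hspecM x hx⟩, ?_⟩
  rw [CFC.rpow_def, cfc_nnreal_eq_real _ _ hX0]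
  refine cfc_congr fun x hx => ?_
  have h1 : (1 : ℝ) ≤ x := hspec1 x hx
  rw [NNReal.coe_rpow, Real.coe_toNNReal x (by linarith)]

lemma op_contOn {X : H →L[ℂ] H} (p : ℝ) (hspec1 : ∀ x ∈ spectrum ℝ X, 1 ≤ x) :
    ContinuousOn (fun x : ℝ => x ^ p) (spectrum ℝ X) := fun x hx =>
  (Real.continuousAt_rpow_const x p (Or.inl (by have := hspec1 x hx; linarith))).continuousWithinAt

lemma op_decomp {X : H →L[ℂ] H} {M : ℝ} (hX1 : 1 ≤ X) (hXM : X ≤ M • 1) (p c : ℝ) :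
    c • (X ^ p - 1) = cfc (fun x : ℝ => c * (x ^ p - 1)) X := by
  have hX0 : (0 : H →L[ℂ] H) ≤ X := zero_le_one_op.trans hX1
  have hsa : IsSelfAdjoint X := .of_nonneg hX0
  obtain ⟨hspec, hXp⟩ := op_cfc_facts hX1 hXM p
  have hcont : ContinuousOn (fun x : ℝ => x ^ p) (spectrum ℝ X) :=
    op_contOn p (fun x hx => (hspec x hx).1)
  have h1 : cfc (fun x : ℝ => c * (x ^ p - 1)) X = c • cfc (fun x : ℝ => x ^ p - 1) X := by
    rw [← cfc_smul c (fun x : ℝ => x ^ p - 1) X (hcont.sub (by fun_prop))]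
    simp only [smul_eq_mul]
  have h2 : cfc (fun x : ℝ => x ^ p - 1) X = cfc (fun x : ℝ => x ^ p) X - 1 := by
    rw [cfc_sub _ _ X hcont (by fun_prop), cfc_const_one ℝ X]
  rw [h1, h2, hXp]

lemma op_decomp' {X : H →L[ℂ] H} (hsa : IsSelfAdjoint X) (c : ℝ) :
    c • (X - 1) = cfc (fun x : ℝ => c * (x - 1)) X := by
  have h1 : cfc (fun x : ℝ => c * (x - 1)) X = c • cfc (fun x : ℝ => x - 1) X := by
    rw [← cfc_smul c (fun x : ℝ => x - 1) X (by fun_prop)]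
    simp only [smul_eq_mul]
  have h2 : cfc (fun x : ℝ => x - 1) X = X - 1 := by
    rw [cfc_sub _ _ X (by fun_prop) (by fun_prop), cfc_id' ℝ X, cfc_const_one ℝ X]
  rw [h1, h2]

lemma op_low {X : H →L[ℂ] H} {M m p : ℝ} (hX1 : 1 ≤ X) (hXM : X ≤ M • 1)
    (hp1 : -1 ≤ p) (hp2 : p ≤ 1) (hp0 : p ≠ 0) (hm : 0 < m) (hm1 : m ≤ 1) :
    p⁻¹ • (X ^ p - 1) ≤ m ^ (p - 1) • (X - 1) := by
  have hX0 : (0 : H →L[ℂ] H) ≤ X := zero_le_one_op.trans hX1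
  have hsa : IsSelfAdjoint X := .of_nonneg hX0
  obtain ⟨hspec, hXp⟩ := op_cfc_facts hX1 hXM p
  have hcont : ContinuousOn (fun x : ℝ => x ^ p) (spectrum ℝ X) :=
    op_contOn p (fun x hx => (hspec x hx).1)
  rw [op_decomp hX1 hXM p p⁻¹, op_decomp' hsa (m ^ (p - 1))]
  exact cfc_mono (fun x hx => sc_low hp1 hp2 hp0 hm hm1 (hspec x hx).1)
    ((hcont.sub (by fun_prop)).const_smul p⁻¹) (by fun_prop)

lemma op_up {X : H →L[ℂ] H} {M p : ℝ} (hX1 : 1 ≤ X) (hXM : X ≤ M • 1)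
    (hp1 : -1 ≤ p) (hp2 : p ≤ 1) (hp0 : p ≠ 0) :
    M ^ (p - 1) • (X - 1) ≤ p⁻¹ • (X ^ p - 1) := by
  have hX0 : (0 : H →L[ℂ] H) ≤ X := zero_le_one_op.trans hX1
  have hsa : IsSelfAdjoint X := .of_nonneg hX0
  obtain ⟨hspec, hXp⟩ := op_cfc_facts hX1 hXM p
  have hcont : ContinuousOn (fun x : ℝ => x ^ p) (spectrum ℝ X) :=
    op_contOn p (fun x hx => (hspec x hx).1)
  rw [op_decomp hX1 hXM p p⁻¹, op_decomp' hsa (M ^ (p - 1))]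
  exact cfc_mono (fun x hx => sc_up hp1 hp2 hp0 (hspec x hx).1 (hspec x hx).2)
    (by fun_prop) ((hcont.sub (by fun_prop)).const_smul p⁻¹)

lemma conj_smul_sub (S Z W : H →L[ℂ] H) (r : ℝ) :
    S * (r • (Z - W)) * S = r • (S * Z * S - S * W * S) := by
  rw [mul_smul_comm, smul_mul_assoc, mul_sub, sub_mul]

end OpIneq

set_option maxHeartbeats 4000000 in
/-- Theorem 2.2 (1): reverse of information monotonicity for the Tsallis relative operator entropy. -/
theorem stmt_3 (A B : H →L[ℂ] H) (hA : 0 ≤ A) (hB : 0 ≤ B)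
    (hAinv : IsUnit A) (hBinv : IsUnit B)
    (m M : ℝ) (hm : 0 < m) (hm1 : m ≤ 1) (h1M : 1 ≤ M)
    (hlow : m • (1 : H →L[ℂ] H) ≤ 1)
    (hmid : (1 : H →L[ℂ] H) ≤ (A ^ (-(1 : ℝ) / 2)) * B * (A ^ (-(1 : ℝ) / 2)))
    (hup : (A ^ (-(1 : ℝ) / 2)) * B * (A ^ (-(1 : ℝ) / 2)) ≤ M • (1 : H →L[ℂ] H))
    (Φ : (H →L[ℂ] H) →ₗ[ℂ] (H →L[ℂ] H)) (hΦ1 : Φ 1 = 1)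
    (hΦpos : ∀ X : H →L[ℂ] H, 0 ≤ X → 0 ≤ Φ X)
    (p : ℝ) (hp1 : -1 ≤ p) (hp2 : p ≤ 1) (hp0 : p ≠ 0) :
    tsallis (Φ A) (Φ B) p ≤ Φ (tsallis A B p) + (m ^ (p - 1) - M ^ (p - 1)) • Φ (B - A) := by
  rcases subsingleton_or_nontrivial H with hH | hH
  · exact le_of_eq (Subsingleton.elim _ _)
  have hnt : Nontrivial (H →L[ℂ] H) := by
    obtain ⟨x, hx⟩ := exists_ne (0 : H)
    exact ⟨0, 1, fun h => hx (by simpa using (ContinuousLinearMap.ext_iff.mp h x).symm)⟩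
  -- basic notation
  set S := A ^ ((1 : ℝ) / 2) with hS
  set c := A ^ (-(1 : ℝ) / 2) with hc
  set C := c * B * c with hCdef
  -- Φ is real-linear and monotone
  have hΦr : ∀ (r : ℝ) (X : H →L[ℂ] H), Φ (r • X) = r • Φ X := fun r X => by
    rw [← Complex.coe_smul, map_smul, Complex.coe_smul]
  have hΦmono : ∀ {X Y : H →L[ℂ] H}, X ≤ Y → Φ X ≤ Φ Y := fun {X Y} h => by
    have := hΦpos _ (sub_nonneg.mpr h)
    rw [map_sub] at this
    exact sub_nonneg.mp this
  -- spectrum facts for A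
  have h0A : (0 : ℝ≥0) ∉ spectrum ℝ≥0 A := (spectrum.zero_notMem_iff ℝ≥0).mpr hAinv
  have hAsa : IsSelfAdjoint A := .of_nonneg hA
  have hS0 : (0 : H →L[ℂ] H) ≤ S := CFC.rpow_nonneg
  have hc0 : (0 : H →L[ℂ] H) ≤ c := CFC.rpow_nonneg
  have hSsa : IsSelfAdjoint S := .of_nonneg hS0
  have hcsa : IsSelfAdjoint c := .of_nonneg hc0
  have hneg : -(1 : ℝ) / 2 = -((1 : ℝ) / 2) := by norm_num
  have hSc : S * c = 1 := by
    rw [hS, hc, hneg]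
    exact CFC.rpow_mul_rpow_neg _ (hAinv.isStrictlyPositive hA)
  have hcS : c * S = 1 := by
    rw [hS, hc, hneg]
    exact CFC.rpow_neg_mul_rpow _ (hAinv.isStrictlyPositive hA)
  have hhalf : (1 : ℝ) / 2 + (1 : ℝ) / 2 = 1 := by norm_num
  have hSS : S * S = A := by
    rw [hS, ← CFC.rpow_add hAinv, hhalf, CFC.rpow_one A hA]
  have hBSCS : S * C * S = B := by
    have : S * C * S = (S * c) * B * (c * S) := by rw [hCdef]; noncomm_ring
    rw [this, hSc, hcS, one_mul, mul_one]
  -- order facts for C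
  have hC1 : (1 : H →L[ℂ] H) ≤ C := hmid
  have hCM : C ≤ M • 1 := hup
  -- A ≤ B and B ≤ M • A
  have hAB : A ≤ B := by
    have h := star_left_conjugate_le_conjugate hC1 S
    rw [hSsa.star_eq, hBSCS, mul_one, hSS] at h
    exact h
  have hBMA : B ≤ M • A := by
    have h := star_left_conjugate_le_conjugate hCM S
    have e : S * (M • (1 : H →L[ℂ] H)) * S = M • A := by
      rw [mul_smul_comm, smul_mul_assoc, mul_one, hSS]
    rw [hSsa.star_eq, hBSCS, e] at h
    exact h
  -- the lower bound: M^(p-1) • Φ(B - A) ≤ Φ (tsallis A B p)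
  have hTs : tsallis A B p = S * (p⁻¹ • (C ^ p - 1)) * S := by
    rw [tsallis, geomMean, ← hS, ← hc, ← hCdef, conj_smul_sub S (C ^ p) 1 p⁻¹, mul_one, hSS]
  have hBA : S * (M ^ (p - 1) • (C - 1)) * S = M ^ (p - 1) • (B - A) := by
    rw [conj_smul_sub S C 1 (M ^ (p - 1)), mul_one, hSS, hBSCS]
  have hup1 : M ^ (p - 1) • (B - A) ≤ tsallis A B p := by
    rw [hTs, ← hBA]
    have h := star_left_conjugate_le_conjugate (op_up hC1 hCM hp1 hp2 hp0) S
    rwa [hSsa.star_eq] at h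
  have hlow1 : M ^ (p - 1) • Φ (B - A) ≤ Φ (tsallis A B p) := by
    have := hΦmono hup1
    rwa [hΦr] at this
  -- Φ A is positive and invertible
  have hΦA0 : (0 : H →L[ℂ] H) ≤ Φ A := hΦpos A hA
  have hΦB0 : (0 : H →L[ℂ] H) ≤ Φ B := hΦpos B hB
  obtain ⟨ε, hε, hεA⟩ : ∃ r > 0, algebraMap ℝ (H →L[ℂ] H) r ≤ A := by
    rw [CFC.exists_pos_algebraMap_le_iff hAsa]
    intro x hx
    have h1 : 0 ≤ x := spectrum_nonneg_of_nonneg hA hx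
    have h2 : x ≠ 0 := by
      intro h
      exact ((spectrum.zero_notMem_iff ℝ).mpr hAinv) (h ▸ hx)
    exact lt_of_le_of_ne h1 (Ne.symm h2)
  have hεΦA : algebraMap ℝ (H →L[ℂ] H) ε ≤ Φ A := by
    have := hΦmono hεA
    rwa [Algebra.algebraMap_eq_smul_one, hΦr, hΦ1, ← Algebra.algebraMap_eq_smul_one] at this
  have hΦAsa : IsSelfAdjoint (Φ A) := .of_nonneg hΦA0
  have hΦAinv : IsUnit (Φ A) := by
    rw [← spectrum.zero_notMem_iff ℝ]
    intro h0
    have := (algebraMap_le_iff_le_spectrum (r := ε) (a := Φ A) hΦAsa).mp hεΦA 0 h0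
    linarith
  have h0ΦA : (0 : ℝ≥0) ∉ spectrum ℝ≥0 (Φ A) := (spectrum.zero_notMem_iff ℝ≥0).mpr hΦAinv
  -- notation for the Φ side
  set S' := (Φ A) ^ ((1 : ℝ) / 2) with hS'
  set c' := (Φ A) ^ (-(1 : ℝ) / 2) with hc'
  set D := c' * (Φ B) * c' with hDdef
  have hS'0 : (0 : H →L[ℂ] H) ≤ S' := CFC.rpow_nonneg
  have hc'0 : (0 : H →L[ℂ] H) ≤ c' := CFC.rpow_nonneg
  have hS'sa : IsSelfAdjoint S' := .of_nonneg hS'0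
  have hc'sa : IsSelfAdjoint c' := .of_nonneg hc'0
  have hS'c' : S' * c' = 1 := by
    rw [hS', hc', hneg]
    exact CFC.rpow_mul_rpow_neg _ (hΦAinv.isStrictlyPositive hΦA0)
  have hc'S' : c' * S' = 1 := by
    rw [hS', hc', hneg]
    exact CFC.rpow_neg_mul_rpow _ (hΦAinv.isStrictlyPositive hΦA0)
  have hS'S' : S' * S' = Φ A := by
    rw [hS', ← CFC.rpow_add hΦAinv, hhalf, CFC.rpow_one (Φ A) hΦA0]
  have hc'Ac' : c' * (Φ A) * c' = 1 := by
    rw [← hS'S']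
    have : c' * (S' * S') * c' = (c' * S') * (S' * c') := by noncomm_ring
    rw [this, hc'S', hS'c', one_mul]
  have hΦBD : S' * D * S' = Φ B := by
    have : S' * D * S' = (S' * c') * (Φ B) * (c' * S') := by rw [hDdef]; noncomm_ring
    rw [this, hS'c', hc'S', one_mul, mul_one]
  -- order facts for D
  have hD1 : (1 : H →L[ℂ] H) ≤ D := by
    have h := star_left_conjugate_le_conjugate (hΦmono hAB) c'
    rwa [hc'sa.star_eq, hc'Ac'] at h
  have hDM : D ≤ M • 1 := by
    have h := star_left_conjugate_le_conjugate (hΦmono hBMA) c'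
    rw [hc'sa.star_eq, hΦr M A] at h
    have e : c' * (M • Φ A) * c' = M • (1 : H →L[ℂ] H) := by
      rw [mul_smul_comm, smul_mul_assoc, hc'Ac']
    rwa [e] at h
  -- the upper bound: tsallis (Φ A) (Φ B) p ≤ m^(p-1) • Φ (B - A)
  have hTs' : tsallis (Φ A) (Φ B) p = S' * (p⁻¹ • (D ^ p - 1)) * S' := by
    rw [tsallis, geomMean, ← hS', ← hc', ← hDdef, conj_smul_sub S' (D ^ p) 1 p⁻¹, mul_one, hS'S']
  have hup2 : tsallis (Φ A) (Φ B) p ≤ m ^ (p - 1) • Φ (B - A) := by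
    rw [hTs']
    have h := star_left_conjugate_le_conjugate (op_low hD1 hDM hp1 hp2 hp0 hm hm1) S'
    rw [hS'sa.star_eq] at h
    have e : S' * (m ^ (p - 1) • (D - 1)) * S' = m ^ (p - 1) • Φ (B - A) := by
      rw [conj_smul_sub, mul_one, hS'S', hΦBD, map_sub]
    rwa [e] at h
  -- conclusion
  calc tsallis (Φ A) (Φ B) p ≤ m ^ (p - 1) • Φ (B - A) := hup2
    _ = M ^ (p - 1) • Φ (B - A) + (m ^ (p - 1) - M ^ (p - 1)) • Φ (B - A) := by
        rw [sub_smul]; abel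
    _ ≤ Φ (tsallis A B p) + (m ^ (p - 1) - M ^ (p - 1)) • Φ (B - A) :=
        add_le_add_left hlow1 _
end

section
/- Let A, B be positive invertible bounded operators on a complex Hilbert space H such that m·1_H ≤ 1_H ≤ A^(−1/2) B A^(−1/2) ≤ M·1_H for real scalars 0 < m ≤ 1 ≤ M, and let Φ be a unital positive linear map on B(H). Then for every p with 1 ≤ p ≤ 2, Φ(T_p(A|B)) ≤ T_p(Φ(A)|Φ(B)) + (M^(p−1) − m^(p−1))·Φ(B − A). -/
open scoped NNReal

set_option maxHeartbeats 4000000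
set_option synthInstance.maxHeartbeats 400000

variable {H : Type*} [NormedAddCommGroup H] [InnerProductSpace ℂ H] [CompleteSpace H]

private lemma scalar_up {p M x : ℝ} (hp1 : 1 ≤ p) (hx1 : 1 ≤ x) (hxM : x ≤ M) :
    x ^ p ≤ p * M ^ (p-1) * x + (1 - p * M ^ (p-1)) := by
  have hx0 : (0:ℝ) < x := lt_of_lt_of_le one_pos hx1
  have hs : -1 ≤ (1 - x)/x := by
    rw [le_div_iff₀ hx0]; linarith
  have hb := one_add_mul_self_le_rpow_one_add hs hp1
  have h1x : 1 + (1-x)/x = x⁻¹ := by field_simp; ring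
  rw [h1x, Real.inv_rpow hx0.le p] at hb
  have hxp : (0:ℝ) < x ^ p := Real.rpow_pos_of_pos hx0 p
  have hxp1 : (0:ℝ) < x ^ (p-1) := Real.rpow_pos_of_pos hx0 _
  have hxx : x ^ p = x ^ (p-1) * x := by
    rw [← Real.rpow_add_one hx0.ne' (p-1)]; ring_nf
  have h2 := mul_le_mul_of_nonneg_right hb hxp.le
  rw [inv_mul_cancel₀ hxp.ne'] at h2
  have key : x ^ p - 1 ≤ p * x ^ (p-1) * (x - 1) := by
    rw [hxx] at h2
    have : (1 + p * ((1 - x) / x)) * (x ^ (p-1) * x)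
        = x ^ (p-1) * x + p * (1 - x) * x ^ (p-1) := by
      field_simp
    rw [this] at h2
    nlinarith [h2, hxx]
  have hM : x ^ (p-1) ≤ M ^ (p-1) := Real.rpow_le_rpow (by linarith) hxM (by linarith)
  nlinarith [mul_le_mul_of_nonneg_right hM (show (0:ℝ) ≤ x - 1 by linarith), hp1]

private lemma scalar_low {p x : ℝ} (hp1 : 1 ≤ p) (hx0 : 0 ≤ x) :
    p * x + (1 - p) ≤ x ^ p := by
  have hb := one_add_mul_self_le_rpow_one_add (s := x - 1) (by linarith) hp1
  have h : 1 + (x - 1) = x := by ring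
  rw [h] at hb
  linarith

private lemma rpow_eq_cfc_real (a : H →L[ℂ] H) (ha : 0 ≤ a) (q : ℝ) :
    a ^ q = cfc (fun x : ℝ => x ^ q) a := by
  rw [CFC.rpow_def, cfc_nnreal_eq_real _ _ ha]
  apply cfc_congr
  intro x hx
  have hx0 : 0 ≤ x := spectrum_nonneg_of_nonneg ha hx
  simp [NNReal.coe_rpow, Real.coe_toNNReal x hx0]

private lemma cfc_affine' (c d : ℝ) (a : H →L[ℂ] H) (ha : IsSelfAdjoint a) :
    cfc (fun x : ℝ => c * x + d) a = c • a + algebraMap ℝ _ d := by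
  rw [cfc_add (R := ℝ) (a := a) (c * ·) (fun _ => d), cfc_const_mul_id c a,
    cfc_const (R := ℝ) d a]

private lemma rsmul_nonneg (c : ℝ) (hc : 0 ≤ c) (Z : H →L[ℂ] H) (hZ : 0 ≤ Z) :
    0 ≤ c • Z := by
  have h := star_left_conjugate_nonneg hZ ((Real.sqrt c : ℝ) • (1 : H →L[ℂ] H))
  have hstar : star ((Real.sqrt c : ℝ) • (1 : H →L[ℂ] H))
      = (Real.sqrt c : ℝ) • (1 : H →L[ℂ] H) := by simp [star_smul]
  rw [hstar] at h
  calc (0 : H →L[ℂ] H) ≤ _ := h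
    _ = c • Z := by
        rw [smul_mul_assoc, mul_smul_comm, smul_mul_assoc, one_mul, mul_one, smul_smul,
          Real.mul_self_sqrt hc]

private lemma rsmul_mono (c : ℝ) (hc : 0 ≤ c) {X Y : H →L[ℂ] H} (h : X ≤ Y) :
    c • X ≤ c • Y := by
  rw [← sub_nonneg, ← smul_sub]
  exact rsmul_nonneg c hc _ (sub_nonneg.2 h)

private lemma cont_rpow (p : ℝ) (hp : 0 ≤ p) (s : Set ℝ) :
    ContinuousOn (fun x : ℝ => x ^ p) s :=
  fun x _ => (Real.continuousAt_rpow_const x p (.inr hp)).continuousWithinAt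

/-- Upper estimate `a^p - 1 ≤ p M^(p-1) (a - 1)` for `1 ≤ a ≤ M`. -/
private lemma op_up_s4 (a : H →L[ℂ] H) (M p : ℝ) (hp1 : 1 ≤ p)
    (ha1 : (1 : H →L[ℂ] H) ≤ a) (haM : a ≤ M • 1) :
    a ^ p - 1 ≤ (p * M ^ (p-1)) • (a - 1) := by
  have h01 : (0 : H →L[ℂ] H) ≤ 1 := by simpa using star_mul_self_nonneg (1 : H →L[ℂ] H)
  have ha0 : (0 : H →L[ℂ] H) ≤ a := le_trans h01 ha1
  have hsa : IsSelfAdjoint a := .of_nonneg ha0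
  have hspec1 : ∀ x ∈ spectrum ℝ a, 1 ≤ x := (CFC.one_le_iff (R := ℝ) a).mp ha1
  have hspecM : ∀ x ∈ spectrum ℝ a, x ≤ M := by
    rw [← le_algebraMap_iff_spectrum_le (R := ℝ) (a := a)]
    rwa [Algebra.algebraMap_eq_smul_one]
  set c := p * M ^ (p-1) with hc
  have h1 : a ^ p ≤ c • a + algebraMap ℝ _ (1 - c) := by
    rw [rpow_eq_cfc_real a ha0 p, ← cfc_affine' c (1-c) a hsa]
    exact cfc_mono (fun x hx => scalar_up hp1 (hspec1 x hx) (hspecM x hx))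
      (cont_rpow p (by linarith) _) (by fun_prop)
  calc a ^ p - 1 ≤ c • a + algebraMap ℝ _ (1-c) - 1 := sub_le_sub_right h1 1
    _ = c • (a - 1) := by
        rw [Algebra.algebraMap_eq_smul_one]
        module

/-- Lower estimate `p (a - 1) ≤ a^p - 1` for `0 ≤ a`. -/
private lemma op_low_s4 (a : H →L[ℂ] H) (p : ℝ) (hp1 : 1 ≤ p) (ha0 : 0 ≤ a) :
    p • (a - 1) ≤ a ^ p - 1 := by
  have hsa : IsSelfAdjoint a := .of_nonneg ha0
  have h1 : p • a + algebraMap ℝ _ (1 - p) ≤ a ^ p := by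
    rw [rpow_eq_cfc_real a ha0 p, ← cfc_affine' p (1-p) a hsa]
    exact cfc_mono
      (fun x hx => scalar_low hp1 (spectrum_nonneg_of_nonneg ha0 hx))
      (by fun_prop) (cont_rpow p (by linarith) _)
  calc p • (a - 1) = p • a + algebraMap ℝ _ (1-p) - 1 := by
        rw [Algebra.algebraMap_eq_smul_one]; module
    _ ≤ a ^ p - 1 := sub_le_sub_right h1 1

/-- Theorem 2.2 (2): complementary inequality for the Tsallis relative operator entropy, `1 ≤ p ≤ 2`. -/
theorem stmt_4 (A B : H →L[ℂ] H) (hA : 0 ≤ A) (hB : 0 ≤ B)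
    (hAinv : IsUnit A) (hBinv : IsUnit B)
    (m M : ℝ) (hm : 0 < m) (hm1 : m ≤ 1) (h1M : 1 ≤ M)
    (hlow : m • (1 : H →L[ℂ] H) ≤ 1)
    (hmid : (1 : H →L[ℂ] H) ≤ (A ^ (-(1 : ℝ) / 2)) * B * (A ^ (-(1 : ℝ) / 2)))
    (hup : (A ^ (-(1 : ℝ) / 2)) * B * (A ^ (-(1 : ℝ) / 2)) ≤ M • (1 : H →L[ℂ] H))
    (Φ : (H →L[ℂ] H) →ₗ[ℂ] (H →L[ℂ] H)) (hΦ1 : Φ 1 = 1)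
    (hΦpos : ∀ X : H →L[ℂ] H, 0 ≤ X → 0 ≤ Φ X)
    (p : ℝ) (hp1 : 1 ≤ p) (hp2 : p ≤ 2) :
    Φ (tsallis A B p) ≤ tsallis (Φ A) (Φ B) p + (M ^ (p - 1) - m ^ (p - 1)) • Φ (B - A) := by
  rcases subsingleton_or_nontrivial H with hH | hH
  · exact le_of_eq (Subsingleton.elim _ _)
  have hnt : Nontrivial (H →L[ℂ] H) := by
    refine ⟨1, 0, fun h => ?_⟩
    obtain ⟨x, hx⟩ := exists_ne (0 : H)
    exact hx (by simpa using DFunLike.congr_fun h x)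
  have hp0 : (0:ℝ) < p := lt_of_lt_of_le one_pos hp1
  have hΦmono : ∀ {X Y : H →L[ℂ] H}, X ≤ Y → Φ X ≤ Φ Y := by
    intro X Y h
    have := hΦpos _ (sub_nonneg.mpr h)
    rw [map_sub] at this
    exact sub_nonneg.mp this
  have heq : ((1:ℝ)/2) + (-(1:ℝ)/2) = 0 := by norm_num
  have heq1 : ((1:ℝ)/2) + ((1:ℝ)/2) = 1 := by norm_num
  obtain ⟨Ah, hAh⟩ : ∃ X, X = A ^ ((1:ℝ)/2) := ⟨_, rfl⟩
  obtain ⟨An, hAn⟩ : ∃ X, X = A ^ (-(1:ℝ)/2) := ⟨_, rfl⟩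
  obtain ⟨C, hC⟩ : ∃ X, X = An * B * An := ⟨_, rfl⟩
  rw [← hAn, ← hC] at hmid hup
  have hAsa : IsSelfAdjoint A := .of_nonneg hA
  have hAhsa : IsSelfAdjoint Ah := hAh ▸ .of_nonneg CFC.rpow_nonneg
  have hAnn : (0:ℝ≥0) ∉ spectrum ℝ≥0 A := spectrum.zero_notMem ℝ≥0 hAinv
  have hAhAn : Ah * An = 1 := by
    rw [hAh, hAn, ← CFC.rpow_add hAinv, heq, CFC.rpow_zero A hA]
  have hAnAh : An * Ah = 1 := by
    rw [hAh, hAn, ← CFC.rpow_add hAinv, add_comm, heq, CFC.rpow_zero A hA]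
  have hAhAh : Ah * Ah = A := by
    rw [hAh, ← CFC.rpow_add hAinv, heq1, CFC.rpow_one A hA]
  have hconjB : Ah * C * Ah = B := by
    rw [hC]
    calc Ah * (An * B * An) * Ah = (Ah * An) * B * (An * Ah) := by
          simp only [mul_assoc]
      _ = B := by rw [hAhAn, hAnAh, one_mul, mul_one]
  -- A ≤ B
  have hAB : A ≤ B := by
    have := star_left_conjugate_le_conjugate hmid Ah
    rw [hAhsa.star_eq, mul_one, hAhAh, hconjB] at this
    exact this
  have hBA0 : (0 : H →L[ℂ] H) ≤ B - A := sub_nonneg.mpr hAB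
  have hX0 : 0 ≤ Φ (B - A) := hΦpos _ hBA0
  have hgeom : geomMean A B p = Ah * C ^ p * Ah := by
    rw [geomMean, hC, hAn, hAh]
  -- Step 1: Φ (tsallis A B p) ≤ M^(p-1) • Φ (B - A)
  have hCp : C ^ p - 1 ≤ (p * M ^ (p-1)) • (C - 1) := op_up_s4 C M p hp1 hmid hup
  have hGA : geomMean A B p - A ≤ (p * M ^ (p-1)) • (B - A) := by
    have h := star_left_conjugate_le_conjugate hCp Ah
    rw [hAhsa.star_eq] at h
    have hl : Ah * (C ^ p - 1) * Ah = geomMean A B p - A := by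
      rw [mul_sub, sub_mul, mul_one, hAhAh, hgeom]
    have hr : Ah * ((p * M ^ (p-1)) • (C - 1)) * Ah = (p * M ^ (p-1)) • (B - A) := by
      rw [mul_smul_comm, smul_mul_assoc, mul_sub, sub_mul, mul_one, hAhAh, hconjB]
    rwa [hl, hr] at h
  have hL : Φ (tsallis A B p) ≤ (M ^ (p-1)) • Φ (B - A) := by
    have h1 : Φ (geomMean A B p - A) ≤ (p * M ^ (p-1)) • Φ (B - A) := by
      have := hΦmono hGA
      rwa [LinearMap.map_smul_of_tower] at this
    have h2 : Φ (tsallis A B p) = p⁻¹ • Φ (geomMean A B p - A) := by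
      rw [tsallis, LinearMap.map_smul_of_tower]
    rw [h2]
    calc p⁻¹ • Φ (geomMean A B p - A) ≤ p⁻¹ • ((p * M ^ (p-1)) • Φ (B - A)) :=
          rsmul_mono p⁻¹ (by positivity) h1
      _ = (M ^ (p-1)) • Φ (B - A) := by
          rw [smul_smul, ← mul_assoc, inv_mul_cancel₀ hp0.ne', one_mul]
  -- Step 2: Φ (B - A) ≤ tsallis (Φ A) (Φ B) p
  have hΦA0 : 0 ≤ Φ A := hΦpos A hA
  have hΦB0 : 0 ≤ Φ B := hΦpos B hB
  have hΦAsa : IsSelfAdjoint (Φ A) := .of_nonneg hΦA0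
  obtain ⟨ε, hε, hεle⟩ : ∃ ε > 0, algebraMap ℝ (H →L[ℂ] H) ε ≤ A := by
    rw [CFC.exists_pos_algebraMap_le_iff (ha := hAsa)]
    intro x hx
    refine lt_of_le_of_ne (spectrum_nonneg_of_nonneg hA hx) ?_
    intro h0
    exact spectrum.zero_notMem ℝ hAinv (h0 ▸ hx)
  have hεΦ : algebraMap ℝ (H →L[ℂ] H) ε ≤ Φ A := by
    have := hΦmono hεle
    rwa [Algebra.algebraMap_eq_smul_one, LinearMap.map_smul_of_tower, hΦ1,
      ← Algebra.algebraMap_eq_smul_one] at this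
  have hΦAspec : ∀ x ∈ spectrum ℝ (Φ A), ε ≤ x :=
    (algebraMap_le_iff_le_spectrum (ha := hΦAsa)).mp hεΦ
  have hΦAunit : IsUnit (Φ A) := by
    apply spectrum.isUnit_of_zero_notMem (R := ℝ)
    intro h0
    have := hΦAspec 0 h0
    linarith
  have hΦAnn : (0:ℝ≥0) ∉ spectrum ℝ≥0 (Φ A) := spectrum.zero_notMem ℝ≥0 hΦAunit
  obtain ⟨Bh, hBh⟩ : ∃ X, X = (Φ A) ^ ((1:ℝ)/2) := ⟨_, rfl⟩
  obtain ⟨Bn, hBn⟩ : ∃ X, X = (Φ A) ^ (-(1:ℝ)/2) := ⟨_, rfl⟩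
  obtain ⟨D, hD⟩ : ∃ X, X = Bn * Φ B * Bn := ⟨_, rfl⟩
  have hBhsa : IsSelfAdjoint Bh := hBh ▸ .of_nonneg CFC.rpow_nonneg
  have hBnsa : IsSelfAdjoint Bn := hBn ▸ .of_nonneg CFC.rpow_nonneg
  have hBhBn : Bh * Bn = 1 := by
    rw [hBh, hBn, ← CFC.rpow_add hΦAunit, heq, CFC.rpow_zero _ hΦA0]
  have hBnBh : Bn * Bh = 1 := by
    rw [hBh, hBn, ← CFC.rpow_add hΦAunit, add_comm, heq, CFC.rpow_zero _ hΦA0]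
  have hBhBh : Bh * Bh = Φ A := by
    rw [hBh, ← CFC.rpow_add hΦAunit, heq1, CFC.rpow_one _ hΦA0]
  have hconjΦB : Bh * D * Bh = Φ B := by
    rw [hD]
    calc Bh * (Bn * Φ B * Bn) * Bh = (Bh * Bn) * Φ B * (Bn * Bh) := by
          simp only [mul_assoc]
      _ = Φ B := by rw [hBhBn, hBnBh, one_mul, mul_one]
  have hgeom' : geomMean (Φ A) (Φ B) p = Bh * D ^ p * Bh := by
    rw [geomMean, hD, hBn, hBh]
  have hD0 : 0 ≤ D := by
    have := star_left_conjugate_nonneg hΦB0 Bn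
    rwa [hBnsa.star_eq, ← hD] at this
  have hDp : p • (D - 1) ≤ D ^ p - 1 := op_low_s4 D p hp1 hD0
  have hR : Φ (B - A) ≤ tsallis (Φ A) (Φ B) p := by
    have h := star_left_conjugate_le_conjugate hDp Bh
    rw [hBhsa.star_eq] at h
    have hl : Bh * (p • (D - 1)) * Bh = p • (Φ B - Φ A) := by
      rw [mul_smul_comm, smul_mul_assoc, mul_sub, sub_mul, mul_one, hBhBh, hconjΦB]
    have hr : Bh * (D ^ p - 1) * Bh = geomMean (Φ A) (Φ B) p - Φ A := by
      rw [mul_sub, sub_mul, mul_one, hBhBh, hgeom']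
    rw [hl, hr] at h
    have h2 : Φ B - Φ A ≤ p⁻¹ • (geomMean (Φ A) (Φ B) p - Φ A) := by
      have := rsmul_mono p⁻¹ (by positivity) h
      rwa [smul_smul, inv_mul_cancel₀ hp0.ne', one_smul] at this
    rw [tsallis]
    rw [← map_sub] at h2
    exact h2
  -- Step 3: combine
  have hk1 : m ^ (p-1) ≤ 1 := Real.rpow_le_one hm.le hm1 (by linarith)
  calc Φ (tsallis A B p) ≤ (M ^ (p-1)) • Φ (B - A) := hL
    _ ≤ (M ^ (p-1)) • Φ (B - A) + (1 - m ^ (p-1)) • Φ (B - A) :=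
        le_add_of_nonneg_right (rsmul_nonneg _ (by linarith) _ hX0)
    _ = Φ (B - A) + (M ^ (p-1) - m ^ (p-1)) • Φ (B - A) := by
        have hsc : M ^ (p-1) + (1 - m ^ (p-1)) = 1 + (M ^ (p-1) - m ^ (p-1)) := by ring
        rw [← add_smul, hsc, add_smul, one_smul]
    _ ≤ tsallis (Φ A) (Φ B) p + (M ^ (p-1) - m ^ (p-1)) • Φ (B - A) :=
        add_le_add_left hR _
end

section
/- Let A, B be positive invertible bounded operators on a complex Hilbert space H such that m·1_H ≤ 1_H ≤ A^(−1/2) B A^(−1/2) ≤ M·1_H for real scalars 0 < m ≤ 1 ≤ M, and let Φ be a unital positive linear map on B(H). Then for every p with 0 < p ≤ 1, Φ(A) ♯_p Φ(B) ≤ Φ(A ♯_p B) + p·(m^(p−1) − M^(p−1))·Φ(B − A). -/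
open scoped NNReal

variable {H : Type*} [NormedAddCommGroup H] [InnerProductSpace ℂ H] [CompleteSpace H]

section Aux

open CFC

variable {𝒜 : Type*} [CStarAlgebra 𝒜] [PartialOrder 𝒜] [StarOrderedRing 𝒜]

/-- Bernoulli-type scalar inequality. -/
lemma aux_bernoulli {p x : ℝ} (hx : 0 ≤ x) (hp1 : 0 ≤ p) (hp2 : p ≤ 1) :
    x ^ p ≤ 1 + p * (x - 1) := by
  have h := rpow_one_add_le_one_add_mul_self (s := x - 1) (by linarith) hp1 hp2
  have : (1 : ℝ) + (x - 1) = x := by ring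
  rw [this] at h
  linarith

/-- Chord-type scalar inequality. -/
lemma aux_chord {p x M : ℝ} (hx1 : 1 ≤ x) (hxM : x ≤ M) (hp1 : 0 < p) (hp2 : p ≤ 1) :
    1 + (p * M ^ (p - 1)) * (x - 1) ≤ x ^ p := by
  have hx0 : (0 : ℝ) < x := lt_of_lt_of_le one_pos hx1
  have hxp : (0 : ℝ) < x ^ p := Real.rpow_pos_of_pos hx0 p
  have hb : (x⁻¹) ^ p ≤ 1 + p * (x⁻¹ - 1) := aux_bernoulli (by positivity) hp1.le hp2
  have hinv : (x⁻¹) ^ p = (x ^ p)⁻¹ := Real.inv_rpow hx0.le p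
  have hsub : x ^ (p - 1) = x ^ p * x⁻¹ := by
    rw [Real.rpow_sub_one hx0.ne']; ring
  -- multiply Bernoulli by x ^ p
  have key : 1 ≤ (1 + p * (x⁻¹ - 1)) * x ^ p := by
    have := mul_le_mul_of_nonneg_right hb hxp.le
    rw [hinv, inv_mul_cancel₀ hxp.ne'] at this
    exact this
  have key2 : 1 ≤ x ^ p + p * x ^ (p - 1) - p * x ^ p := by
    have : (1 + p * (x⁻¹ - 1)) * x ^ p = x ^ p + p * (x⁻¹ * x ^ p) - p * x ^ p := by ring
    rw [this, mul_comm x⁻¹ (x ^ p), ← hsub] at key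
    linarith
  -- x ^ (p-1) ≥ M ^ (p-1)
  have hM : M ^ (p - 1) ≤ x ^ (p - 1) :=
    Real.rpow_le_rpow_of_nonpos hx0 hxM (by linarith)
  have hfin : p * M ^ (p - 1) * (x - 1) ≤ p * x ^ (p - 1) * (x - 1) :=
    mul_le_mul_of_nonneg_right (mul_le_mul_of_nonneg_left hM hp1.le) (by linarith)
  have hxpx : x ^ (p - 1) * x = x ^ p := by
    rw [hsub]; field_simp
  nlinarith [key2, hfin]

lemma aux_rpow_eq_cfc_real (a : 𝒜) {p : ℝ} (hp : 0 < p) (ha : 0 ≤ a) :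
    a ^ p = cfc (fun x : ℝ => x ^ p) a := by
  rw [CFC.rpow_def, cfc_nnreal_eq_real _ _ ha]
  apply cfc_congr
  intro x hx
  have hx0 : 0 ≤ x := spectrum_nonneg_of_nonneg ha hx
  simp only [NNReal.coe_rpow, Real.coe_toNNReal x hx0]

lemma aux_cont {p : ℝ} (hp : 0 ≤ p) (s : Set ℝ) : ContinuousOn (fun x : ℝ => x ^ p) s :=
  continuousOn_id.rpow_const fun _ _ => Or.inr hp

lemma aux_affine_cfc (c d : ℝ) (a : 𝒜) (ha : 0 ≤ a) :
    cfc (fun x : ℝ => d + c * x) a = d • (1 : 𝒜) + c • a := by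
  have hsa : IsSelfAdjoint a := .of_nonneg ha
  rw [cfc_add (a := a) (fun _ => d) (fun x => c * x), cfc_const d a hsa,
    cfc_const_mul c (fun x => x) a, cfc_id' ℝ a hsa, Algebra.algebraMap_eq_smul_one]

/-- Operator tangent-line inequality. -/
lemma aux_tangent (a : 𝒜) {p : ℝ} (ha : 0 ≤ a) (hp1 : 0 < p) (hp2 : p ≤ 1) :
    a ^ p ≤ (1 - p) • (1 : 𝒜) + p • a := by
  rw [aux_rpow_eq_cfc_real a hp1 ha, ← aux_affine_cfc p (1 - p) a ha]
  apply cfc_mono (fun x hx => ?_) (aux_cont hp1.le _)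
  have hx0 : 0 ≤ x := spectrum_nonneg_of_nonneg ha hx
  have := aux_bernoulli hx0 hp1.le hp2
  linarith

/-- Operator chord inequality. -/
lemma aux_chord_op (a : 𝒜) {p M : ℝ} (ha : 0 ≤ a)
    (hsp : spectrum ℝ a ⊆ Set.Icc 1 M) (hp1 : 0 < p) (hp2 : p ≤ 1) :
    (1 - p * M ^ (p - 1)) • (1 : 𝒜) + (p * M ^ (p - 1)) • a ≤ a ^ p := by
  rw [aux_rpow_eq_cfc_real a hp1 ha, ← aux_affine_cfc (p * M ^ (p - 1)) _ a ha]
  apply cfc_mono (fun x hx => ?_) (by fun_prop) (aux_cont hp1.le _)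
  obtain ⟨hx1, hxM⟩ := hsp hx
  have := aux_chord hx1 hxM hp1 hp2
  linarith

end Aux

section Aux2

variable {𝒜 : Type*} [CStarAlgebra 𝒜] [PartialOrder 𝒜] [StarOrderedRing 𝒜]

lemma aux_algebraMap_nonneg {r : ℝ} (hr : 0 ≤ r) : (0 : 𝒜) ≤ algebraMap ℝ 𝒜 r := by
  have h : algebraMap ℝ 𝒜 r
      = star (algebraMap ℝ 𝒜 (Real.sqrt r)) * algebraMap ℝ 𝒜 (Real.sqrt r) := by
    rw [← algebraMap_star_comm, star_trivial, ← map_mul, Real.mul_self_sqrt hr]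
  rw [h]
  exact star_mul_self_nonneg _

lemma aux_smul_nonneg {r : ℝ} (hr : 0 ≤ r) {a : 𝒜} (ha : 0 ≤ a) : 0 ≤ r • a := by
  have h : r • a = algebraMap ℝ 𝒜 (Real.sqrt r) * a * algebraMap ℝ 𝒜 (Real.sqrt r) := by
    rw [Algebra.algebraMap_eq_smul_one, smul_mul_assoc, mul_smul_comm, one_mul, mul_one,
      smul_smul, Real.mul_self_sqrt hr]
  rw [h]
  exact conjugate_nonneg_of_nonneg ha (aux_algebraMap_nonneg (Real.sqrt_nonneg r))

end Aux2

set_option maxHeartbeats 1000000 in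
/-- Corollary 2.3 (1): converse of Ando's inequality for `0 < p ≤ 1`. -/
theorem stmt_5 (A B : H →L[ℂ] H) (hA : 0 ≤ A) (hB : 0 ≤ B)
    (hAinv : IsUnit A) (hBinv : IsUnit B)
    (m M : ℝ) (hm : 0 < m) (hm1 : m ≤ 1) (h1M : 1 ≤ M)
    (hlow : m • (1 : H →L[ℂ] H) ≤ 1)
    (hmid : (1 : H →L[ℂ] H) ≤ (A ^ (-(1 : ℝ) / 2)) * B * (A ^ (-(1 : ℝ) / 2)))
    (hup : (A ^ (-(1 : ℝ) / 2)) * B * (A ^ (-(1 : ℝ) / 2)) ≤ M • (1 : H →L[ℂ] H))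
    (Φ : (H →L[ℂ] H) →ₗ[ℂ] (H →L[ℂ] H)) (hΦ1 : Φ 1 = 1)
    (hΦpos : ∀ X : H →L[ℂ] H, 0 ≤ X → 0 ≤ Φ X)
    (p : ℝ) (hp1 : 0 < p) (hp2 : p ≤ 1) :
    geomMean (Φ A) (Φ B) p ≤ Φ (geomMean A B p) + (p * (m ^ (p - 1) - M ^ (p - 1))) • Φ (B - A) := by
  rcases subsingleton_or_nontrivial (H →L[ℂ] H) with hsub | hnt
  · exact le_of_eq (Subsingleton.elim _ _)
  -- basic facts about Φ
  have hmono : ∀ {X Y : H →L[ℂ] H}, X ≤ Y → Φ X ≤ Φ Y := by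
    intro X Y h
    have h2 := hΦpos (Y - X) (sub_nonneg.mpr h)
    rw [map_sub] at h2
    exact sub_nonneg.mp h2
  have hΦsmul : ∀ (r : ℝ) (X : H →L[ℂ] H), Φ (r • X) = r • Φ X := fun r X =>
    LinearMap.map_smul_of_tower Φ r X
  -- facts about A
  have hsaA : IsSelfAdjoint A := .of_nonneg hA
  have h0A : 0 ∉ spectrum ℝ≥0 A := (spectrum.zero_notMem_iff ℝ≥0).mpr hAinv
  have hhalf : ((1 : ℝ)/2) + (-(1 : ℝ)/2) = 0 := by norm_num
  have hhalf' : (-(1 : ℝ)/2) + ((1 : ℝ)/2) = 0 := by norm_num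
  have hhalf1 : ((1 : ℝ)/2) + ((1 : ℝ)/2) = 1 := by norm_num
  have hA1 : A ^ ((1 : ℝ)/2) * A ^ (-(1 : ℝ)/2) = 1 := by
    rw [← CFC.rpow_add hAinv, hhalf, CFC.rpow_zero A hA]
  have hA2 : A ^ (-(1 : ℝ)/2) * A ^ ((1 : ℝ)/2) = 1 := by
    rw [← CFC.rpow_add hAinv, hhalf', CFC.rpow_zero A hA]
  have hAsq : A ^ ((1 : ℝ)/2) * A ^ ((1 : ℝ)/2) = A := by
    rw [← CFC.rpow_add hAinv, hhalf1, CFC.rpow_one A hA]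
  set sq : H →L[ℂ] H := A ^ ((1 : ℝ)/2) with hsqdef
  have hsq0 : 0 ≤ sq := CFC.rpow_nonneg
  have hsqsa : IsSelfAdjoint sq := .of_nonneg hsq0
  set C : H →L[ℂ] H := (A ^ (-(1 : ℝ) / 2)) * B * (A ^ (-(1 : ℝ) / 2)) with hCdef
  have hBC : sq * C * sq = B := by
    have e : sq * ((A ^ (-(1 : ℝ)/2)) * B * (A ^ (-(1 : ℝ)/2))) * sq
        = (sq * (A ^ (-(1 : ℝ)/2))) * B * ((A ^ (-(1 : ℝ)/2)) * sq) := by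
      simp only [mul_assoc]
    rw [hCdef, e, hsqdef, hA1, hA2, one_mul, mul_one]
  have hC0 : (0 : H →L[ℂ] H) ≤ C := zero_le_one.trans hmid
  have hCsa : IsSelfAdjoint C := .of_nonneg hC0
  -- A ≤ B
  have hAB : A ≤ B := by
    have h := conjugate_le_conjugate_of_nonneg hmid hsq0
    rwa [mul_one, hAsq, hBC] at h
  have hX0 : 0 ≤ Φ (B - A) := hΦpos _ (sub_nonneg.mpr hAB)
  -- spectrum of C
  have hCspec : spectrum ℝ C ⊆ Set.Icc 1 M := by
    intro x hx
    refine ⟨(CFC.one_le_iff (R := ℝ) C hCsa).mp hmid x hx, ?_⟩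
    have hup' : C ≤ algebraMap ℝ (H →L[ℂ] H) M := by
      rwa [Algebra.algebraMap_eq_smul_one]
    exact (le_algebraMap_iff_spectrum_le (r := M) (a := C) hCsa).mp hup' x hx
  set c : ℝ := p * M ^ (p - 1) with hcdef
  -- chord inequality conjugated
  have hchord : (1 - c) • (1 : H →L[ℂ] H) + c • C ≤ C ^ p := aux_chord_op C hC0 hCspec hp1 hp2
  have hgeom_lower : (1 - c) • A + c • B ≤ geomMean A B p := by
    have h := hsqsa.conjugate_le_conjugate hchord
    have e : sq * ((1 - c) • (1 : H →L[ℂ] H) + c • C) * sq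
        = (1 - c) • (sq * 1 * sq) + c • (sq * C * sq) := by
      simp only [mul_add, add_mul, mul_smul_comm, smul_mul_assoc]
    rw [e, mul_one, hAsq, hBC] at h
    exact h
  have hPhi_lower : (1 - c) • Φ A + c • Φ B ≤ Φ (geomMean A B p) := by
    have h := hmono hgeom_lower
    rwa [map_add, hΦsmul, hΦsmul] at h
  -- Φ A is positive invertible
  have hA'0 : 0 ≤ Φ A := hΦpos A hA
  have hB'0 : 0 ≤ Φ B := hΦpos B hB
  have hposspec : ∀ x ∈ spectrum ℝ A, 0 < x := by
    intro x hx
    refine (spectrum_nonneg_of_nonneg hA hx).lt_of_ne' fun h0 => ?_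
    exact ((spectrum.zero_notMem_iff ℝ).mpr hAinv) (h0 ▸ hx)
  obtain ⟨r, hr, hrA⟩ := (CFC.exists_pos_algebraMap_le_iff hsaA).mpr hposspec
  have hΦr : algebraMap ℝ (H →L[ℂ] H) r ≤ Φ A := by
    have h := hmono hrA
    rwa [Algebra.algebraMap_eq_smul_one, hΦsmul, hΦ1, ← Algebra.algebraMap_eq_smul_one] at h
  have hA'u : IsUnit (Φ A) :=
    CStarAlgebra.isUnit_of_le _ hΦr ⟨aux_algebraMap_nonneg hr.le,
      (isUnit_iff_ne_zero.mpr hr.ne').map (algebraMap ℝ (H →L[ℂ] H))⟩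
  have h0A' : 0 ∉ spectrum ℝ≥0 (Φ A) := (spectrum.zero_notMem_iff ℝ≥0).mpr hA'u
  have hA'1 : (Φ A) ^ ((1 : ℝ)/2) * (Φ A) ^ (-(1 : ℝ)/2) = 1 := by
    rw [← CFC.rpow_add hA'u, hhalf, CFC.rpow_zero (Φ A) hA'0]
  have hA'2 : (Φ A) ^ (-(1 : ℝ)/2) * (Φ A) ^ ((1 : ℝ)/2) = 1 := by
    rw [← CFC.rpow_add hA'u, hhalf', CFC.rpow_zero (Φ A) hA'0]
  have hA'sq : (Φ A) ^ ((1 : ℝ)/2) * (Φ A) ^ ((1 : ℝ)/2) = Φ A := by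
    rw [← CFC.rpow_add hA'u, hhalf1, CFC.rpow_one (Φ A) hA'0]
  set sq' : H →L[ℂ] H := (Φ A) ^ ((1 : ℝ)/2) with hsq'def
  have hsq'0 : 0 ≤ sq' := CFC.rpow_nonneg
  have hsq'sa : IsSelfAdjoint sq' := .of_nonneg hsq'0
  set D : H →L[ℂ] H := ((Φ A) ^ (-(1 : ℝ)/2)) * Φ B * ((Φ A) ^ (-(1 : ℝ)/2)) with hDdef
  have hD0 : 0 ≤ D := conjugate_nonneg_of_nonneg hB'0 CFC.rpow_nonneg
  have hDB : sq' * D * sq' = Φ B := by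
    have e : sq' * (((Φ A) ^ (-(1 : ℝ)/2)) * Φ B * ((Φ A) ^ (-(1 : ℝ)/2))) * sq'
        = (sq' * ((Φ A) ^ (-(1 : ℝ)/2))) * Φ B * (((Φ A) ^ (-(1 : ℝ)/2)) * sq') := by
      simp only [mul_assoc]
    rw [hDdef, e, hsq'def, hA'1, hA'2, one_mul, mul_one]
  -- tangent inequality conjugated
  have htan : D ^ p ≤ (1 - p) • (1 : H →L[ℂ] H) + p • D := aux_tangent D hD0 hp1 hp2
  have hgeom_upper : geomMean (Φ A) (Φ B) p ≤ (1 - p) • Φ A + p • Φ B := by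
    have h := hsq'sa.conjugate_le_conjugate htan
    have e : sq' * ((1 - p) • (1 : H →L[ℂ] H) + p • D) * sq'
        = (1 - p) • (sq' * 1 * sq') + p • (sq' * D * sq') := by
      simp only [mul_add, add_mul, mul_smul_comm, smul_mul_assoc]
    rw [e, mul_one, hA'sq, hDB] at h
    exact h
  -- scalar comparison
  set c' : ℝ := p * (m ^ (p - 1) - M ^ (p - 1)) with hc'def
  have hpcc' : p ≤ c + c' := by
    have h1 : (1 : ℝ) ≤ m ^ (p - 1) := by
      have := Real.rpow_le_rpow_of_exponent_ge hm hm1 (show p - 1 ≤ 0 by linarith)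
      rwa [Real.rpow_zero] at this
    have : c + c' = p * m ^ (p - 1) := by rw [hcdef, hc'def]; ring
    rw [this]
    nlinarith
  -- combine
  calc geomMean (Φ A) (Φ B) p ≤ (1 - p) • Φ A + p • Φ B := hgeom_upper
    _ = Φ A + p • (Φ B - Φ A) := by module
    _ ≤ Φ A + (c + c') • (Φ B - Φ A) := by
        have hBA' : 0 ≤ Φ B - Φ A := by
          rw [← map_sub]; exact hX0
        have h := aux_smul_nonneg (sub_nonneg.mpr hpcc') hBA'
        rw [sub_smul] at h
        have := sub_nonneg.mp h
        exact add_le_add_right this _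
    _ = ((1 - c) • Φ A + c • Φ B) + c' • (Φ B - Φ A) := by module
    _ ≤ Φ (geomMean A B p) + c' • Φ (B - A) := by
        rw [← map_sub]
        exact add_le_add_left hPhi_lower _
end

section
/- Let A, B be positive invertible bounded operators on a complex Hilbert space H such that m·1_H ≤ 1_H ≤ A^(−1/2) B A^(−1/2) ≤ M·1_H for real scalars 0 < m ≤ 1 ≤ M, and let Φ be a unital positive linear map on B(H). Then for every p with −1 ≤ p < 0, Φ(A) ♮_p Φ(B) ≥ Φ(A ♮_p B) + p·(m^(p−1) − M^(p−1))·Φ(B − A). -/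
open scoped NNReal

section scalar


private lemma convexOn_rpow_nonpos {p : ℝ} (hp : p ≤ 0) :
    ConvexOn ℝ (Set.Ioi (0:ℝ)) fun x : ℝ => x ^ p := by
  apply convexOn_of_hasDerivWithinAt2_nonneg (f' := fun x => p * x ^ (p-1))
    (f'' := fun x => p * ((p-1) * x ^ (p-2))) (convex_Ioi 0)
  · intro x hx
    exact (Real.continuousAt_rpow_const x p (Or.inl (ne_of_gt hx))).continuousWithinAt
  · intro x hx
    rw [interior_Ioi] at hx
    exact (Real.hasDerivAt_rpow_const (Or.inl (ne_of_gt hx))).hasDerivWithinAt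
  · intro x hx
    rw [interior_Ioi] at hx
    exact (((Real.hasDerivAt_rpow_const (p := p - 1)
      (Or.inl (ne_of_gt hx))).const_mul p).congr_deriv (by ring)).hasDerivWithinAt
  · intro x hx
    rw [interior_Ioi] at hx
    have h1 : (p-1) * x ^ (p-2) ≤ 0 :=
      mul_nonpos_of_nonpos_of_nonneg (by linarith) (Real.rpow_nonneg hx.le _)
    exact mul_nonneg_iff.mpr (Or.inr ⟨hp, h1⟩)

private lemma tangent_aux {p x : ℝ} (hp1 : -1 ≤ p) (hp2 : p ≤ 0) (hx : 0 < x) :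
    1 + p * (x - 1) ≤ x ^ p := by
  rcases le_or_gt (1 + p * (x - 1)) 0 with h | h
  · exact h.trans (Real.rpow_pos_of_pos hx p).le
  · have hq0 : 0 ≤ -p := by linarith
    have hq1 : -p ≤ 1 := by linarith
    have hxq : x ^ (-p) ≤ 1 + (-p) * (x - 1) := by
      have := rpow_one_add_le_one_add_mul_self (s := x - 1) (by linarith) hq0 hq1
      simpa using this
    have hxqpos : 0 < x ^ (-p) := Real.rpow_pos_of_pos hx _
    have key : (1 + p * (x - 1)) * x ^ (-p) ≤ 1 := by nlinarith [sq_nonneg (p * (x - 1))]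
    calc 1 + p * (x - 1) ≤ 1 / x ^ (-p) := (le_div_iff₀ hxqpos).mpr key
      _ = x ^ p := by rw [one_div, ← Real.rpow_neg hx.le, neg_neg]

private lemma chord_aux {p M x : ℝ} (hp : p ≤ 0) (hM : 1 ≤ M) (hx1 : 1 ≤ x) (hxM : x ≤ M) :
    x ^ p ≤ 1 + (M ^ p - 1) / (M - 1) * (x - 1) := by
  rcases eq_or_lt_of_le hM with rfl | hM'
  · have : x = 1 := le_antisymm hxM hx1
    simp [this]
  · have hM0 : (0:ℝ) < M - 1 := by linarith
    have hcvx := convexOn_rpow_nonpos hp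
    have ha : (0:ℝ) ≤ (M - x) / (M - 1) := div_nonneg (by linarith) hM0.le
    have hb : (0:ℝ) ≤ (x - 1) / (M - 1) := div_nonneg (by linarith) hM0.le
    have hab : (M - x) / (M - 1) + (x - 1) / (M - 1) = 1 := by field_simp; ring
    have h1 : (1:ℝ) ∈ Set.Ioi (0:ℝ) := by norm_num
    have h2 : M ∈ Set.Ioi (0:ℝ) := by simp only [Set.mem_Ioi]; linarith
    have hcc := hcvx.2 h1 h2 ha hb hab
    simp only [smul_eq_mul, mul_one, Real.one_rpow] at hcc
    have hx' : (M - x) / (M - 1) + (x - 1) / (M - 1) * M = x := by field_simp; ring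
    rw [hx'] at hcc
    have heq : (M - x) / (M - 1) + (x - 1) / (M - 1) * M ^ p
        = 1 + (M ^ p - 1) / (M - 1) * (x - 1) := by field_simp; ring
    linarith [hcc, heq.le, heq.ge]

private lemma beta_le_aux {p M : ℝ} (hp1 : -1 ≤ p) (hp2 : p ≤ 0) (hM : 1 < M) :
    (M ^ p - 1) / (M - 1) ≤ p * M ^ (p - 1) := by
  have hM0 : (0:ℝ) < M := by linarith
  have h := tangent_aux hp1 hp2 (x := 1 / M) (by positivity)
  have hMp : 0 < M ^ p := Real.rpow_pos_of_pos hM0 p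
  have hmul : M ^ p * (1 / M) ^ p = 1 := by
    rw [← Real.mul_rpow hM0.le (by positivity), mul_one_div_cancel (ne_of_gt hM0), Real.one_rpow]
  have hpow : M ^ p * (1 / M) = M ^ (p - 1) := by
    rw [Real.rpow_sub hM0, Real.rpow_one]; ring
  have key : M ^ p * (1 + p * (1 / M - 1)) ≤ 1 :=
    (mul_le_mul_of_nonneg_left h hMp.le).trans_eq hmul
  have e : M ^ p * (1 + p * (1/M - 1)) = M ^ p + p * (M ^ p * (1/M)) - p * M ^ p := by ring
  rw [e, hpow] at key
  have hpow2 : M ^ (p-1) * M = M ^ p := by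
    rw [← hpow]; field_simp
  rw [div_le_iff₀ (by linarith : (0:ℝ) < M - 1)]
  have e2 : p * M ^ (p-1) * (M-1) = p * (M ^ (p-1) * M) - p * M ^ (p-1) := by ring
  rw [e2, hpow2]
  linarith

private lemma lower_scalar {p m M x : ℝ} (hp1 : -1 ≤ p) (hp2 : p ≤ 0) (hm : 0 < m)
    (hm1 : m ≤ 1) (hM : 1 ≤ M) (hx1 : 1 ≤ x) (hxM : x ≤ M) :
    1 + (M ^ p - 1) / (M - 1) * (x - 1) + p * (m ^ (p-1) - M ^ (p-1)) * (x - 1) ≤ x ^ p := by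
  have ht := tangent_aux hp1 hp2 (by linarith : (0:ℝ) < x)
  rcases eq_or_lt_of_le hM with rfl | hM'
  · have hx : x = 1 := le_antisymm hxM hx1
    simp [hx]
  · have hβ := beta_le_aux hp1 hp2 hM'
    have hm' : 1 ≤ m ^ (p-1) := Real.one_le_rpow_of_pos_of_le_one_of_nonpos hm hm1 (by linarith)
    have hpm : p * m ^ (p-1) ≤ p * 1 := mul_le_mul_of_nonpos_left hm' hp2
    have hc : (M ^ p - 1)/(M-1) + p * (m ^ (p-1) - M ^ (p-1)) ≤ p := by nlinarith
    have hx0 : (0:ℝ) ≤ x - 1 := by linarith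
    nlinarith [mul_le_mul_of_nonneg_right hc hx0]

end scalar

variable {H : Type*} [NormedAddCommGroup H] [InnerProductSpace ℂ H] [CompleteSpace H]

/-- The weighted operator geometric mean `A ♮ₚ B = A^(1/2) (A^(-1/2) B A^(-1/2))^p A^(1/2)`,
operator powers being taken in the continuous functional calculus. -/


private lemma myrpow_eq_real_cfc (a : H →L[ℂ] H) (y : ℝ) (ha : 0 ≤ a) :
    a ^ y = cfc (fun x : ℝ => x ^ y) a := by
  rw [CFC.rpow_def, cfc_nnreal_eq_real _ _ ha]
  apply cfc_congr
  intro x hx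
  have hx0 : 0 ≤ x := spectrum_nonneg_of_nonneg ha hx
  simp [NNReal.coe_rpow, Real.coe_toNNReal x hx0]

private lemma mycfc_affine (r s : ℝ) (a : H →L[ℂ] H) (ha : IsSelfAdjoint a) :
    cfc (fun x : ℝ => r + s * x) a = r • 1 + s • a := by
  rw [cfc_add a (fun _ => r) (fun x => s * x), cfc_const r a,
    cfc_const_mul s (fun x : ℝ => x) a, cfc_id' ℝ a, Algebra.algebraMap_eq_smul_one]

private lemma myPhi_smul (Φ : (H →L[ℂ] H) →ₗ[ℂ] (H →L[ℂ] H)) (r : ℝ) (X : H →L[ℂ] H) :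
    Φ (r • X) = r • Φ X := by
  rw [← algebraMap_smul ℂ r X, map_smul, algebraMap_smul]

set_option maxHeartbeats 2000000 in
set_option synthInstance.maxHeartbeats 400000 in
/-- Corollary 2.3 (2): converse of Ando's inequality for `-1 ≤ p < 0`. -/
theorem stmt_6 (A B : H →L[ℂ] H) (hA : 0 ≤ A) (hB : 0 ≤ B)
    (hAinv : IsUnit A) (hBinv : IsUnit B)
    (m M : ℝ) (hm : 0 < m) (hm1 : m ≤ 1) (h1M : 1 ≤ M)
    (hlow : m • (1 : H →L[ℂ] H) ≤ 1)
    (hmid : (1 : H →L[ℂ] H) ≤ (A ^ (-(1 : ℝ) / 2)) * B * (A ^ (-(1 : ℝ) / 2)))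
    (hup : (A ^ (-(1 : ℝ) / 2)) * B * (A ^ (-(1 : ℝ) / 2)) ≤ M • (1 : H →L[ℂ] H))
    (Φ : (H →L[ℂ] H) →ₗ[ℂ] (H →L[ℂ] H)) (hΦ1 : Φ 1 = 1)
    (hΦpos : ∀ X : H →L[ℂ] H, 0 ≤ X → 0 ≤ Φ X)
    (p : ℝ) (hp1 : -1 ≤ p) (hp2 : p < 0) :
    Φ (geomMean A B p) + (p * (m ^ (p - 1) - M ^ (p - 1))) • Φ (B - A) ≤ geomMean (Φ A) (Φ B) p := by
  rcases subsingleton_or_nontrivial (H →L[ℂ] H) with hss | hnt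
  · exact le_of_eq (Subsingleton.elim _ _)
  have hmono : ∀ {X Y : H →L[ℂ] H}, X ≤ Y → Φ X ≤ Φ Y := fun {X Y} h =>
    sub_nonneg.mp (by rw [← map_sub]; exact hΦpos _ (sub_nonneg.mpr h))
  set β : ℝ := (M ^ p - 1) / (M - 1) with hβdef
  set c : ℝ := p * (m ^ (p - 1) - M ^ (p - 1)) with hcdef
  simp only [geomMean]
  rw [show (-(1:ℝ)/2 : ℝ) = (-(1/2) : ℝ) by norm_num] at hmid hup ⊢
  -- abbreviations
  have hsA : (0 : ℝ≥0) ∉ spectrum ℝ≥0 A := spectrum.zero_notMem ℝ≥0 hAinv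
  have hAh : (0 : H →L[ℂ] H) ≤ A ^ ((1:ℝ)/2) := CFC.rpow_nonneg
  have hsaAh : IsSelfAdjoint (A ^ ((1:ℝ)/2)) := .of_nonneg hAh
  have hhm : A ^ ((1:ℝ)/2) * A ^ (-(1/2) : ℝ) = 1 := by
    rw [← CFC.rpow_add hAinv, show (1:ℝ)/2 + (-(1/2):ℝ) = 0 by norm_num, CFC.rpow_zero A hA]
  have hmh : A ^ (-(1/2) : ℝ) * A ^ ((1:ℝ)/2) = 1 := by
    rw [← CFC.rpow_add hAinv, show (-(1/2):ℝ) + (1:ℝ)/2 = 0 by norm_num, CFC.rpow_zero A hA]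
  have hhh : A ^ ((1:ℝ)/2) * A ^ ((1:ℝ)/2) = A := by
    rw [← CFC.rpow_add hAinv, show (1:ℝ)/2 + (1:ℝ)/2 = 1 by norm_num, CFC.rpow_one A hA]
  have hC0 : (0 : H →L[ℂ] H) ≤ A ^ (-(1/2) : ℝ) * B * A ^ (-(1/2) : ℝ) :=
    zero_le_one.trans hmid
  have hsaC : IsSelfAdjoint (A ^ (-(1/2) : ℝ) * B * A ^ (-(1/2) : ℝ)) := .of_nonneg hC0
  have hBC : A ^ ((1:ℝ)/2) * (A ^ (-(1/2) : ℝ) * B * A ^ (-(1/2) : ℝ)) * A ^ ((1:ℝ)/2) = B := by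
    have e1 : A ^ ((1:ℝ)/2) * (A ^ (-(1/2) : ℝ) * B * A ^ (-(1/2) : ℝ)) * A ^ ((1:ℝ)/2)
        = (A ^ ((1:ℝ)/2) * A ^ (-(1/2) : ℝ)) * B * (A ^ (-(1/2) : ℝ) * A ^ ((1:ℝ)/2)) := by
      simp only [mul_assoc]
    rw [e1, hhm, hmh, one_mul, mul_one]
  have hAB : A ≤ B := by
    have h := IsSelfAdjoint.conjugate_le_conjugate hmid hsaAh
    rwa [mul_one, hhh, hBC] at h
  have hBM : B ≤ M • A := by
    have h := IsSelfAdjoint.conjugate_le_conjugate hup hsaAh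
    rwa [hBC, mul_smul_comm, smul_mul_assoc, mul_one, hhh] at h
  have hspecC : ∀ x ∈ spectrum ℝ (A ^ (-(1/2) : ℝ) * B * A ^ (-(1/2) : ℝ)), 1 ≤ x ∧ x ≤ M := by
    intro x hx
    constructor
    · exact (algebraMap_le_iff_le_spectrum hsaC).mp (by simpa using hmid) x hx
    · exact (le_algebraMap_iff_spectrum_le hsaC).mp
        (by rw [Algebra.algebraMap_eq_smul_one]; exact hup) x hx
  have hCp : (A ^ (-(1/2) : ℝ) * B * A ^ (-(1/2) : ℝ)) ^ p
      ≤ (1 - β) • 1 + β • (A ^ (-(1/2) : ℝ) * B * A ^ (-(1/2) : ℝ)) := by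
    rw [myrpow_eq_real_cfc _ p hC0, ← mycfc_affine (1-β) β _ hsaC]
    refine cfc_mono (fun x hx => ?_) ?_ ?_
    · obtain ⟨h1, h2⟩ := hspecC x hx
      have hch := chord_aux hp2.le h1M h1 h2
      rw [← hβdef] at hch
      have e : 1 + β * (x-1) = (1-β) + β * x := by ring
      linarith
    · exact fun x hx => (Real.continuousAt_rpow_const x p
        (Or.inl (by linarith [(hspecC x hx).1]))).continuousWithinAt
    · exact (continuous_const.add (continuous_const.mul continuous_id)).continuousOn
  have step1 : Φ (A ^ ((1:ℝ)/2) * (A ^ (-(1/2) : ℝ) * B * A ^ (-(1/2) : ℝ)) ^ p * A ^ ((1:ℝ)/2))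
      ≤ (1-β) • Φ A + β • Φ B := by
    have hconj := IsSelfAdjoint.conjugate_le_conjugate hCp hsaAh
    have e : A ^ ((1:ℝ)/2) * ((1-β) • 1 + β • (A ^ (-(1/2) : ℝ) * B * A ^ (-(1/2) : ℝ)))
        * A ^ ((1:ℝ)/2) = (1-β) • A + β • B := by
      rw [mul_add, add_mul, mul_smul_comm, mul_smul_comm, smul_mul_assoc, smul_mul_assoc,
        mul_one, hhh, hBC]
    rw [e] at hconj
    have h2 := hmono hconj
    rwa [map_add, myPhi_smul, myPhi_smul] at h2
  -- Φ A is positive invertible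
  have hΦA : 0 ≤ Φ A := hΦpos A hA
  have hΦB : 0 ≤ Φ B := hΦpos B hB
  obtain ⟨r, hr, hrA⟩ := (CFC.exists_pos_algebraMap_le_iff (a := A) (.of_nonneg hA)).mpr
    (fun x hx => lt_of_le_of_ne (spectrum_nonneg_of_nonneg hA hx)
      (by rintro rfl; exact spectrum.zero_notMem ℝ hAinv hx))
  have hrΦ : algebraMap ℝ (H →L[ℂ] H) r ≤ Φ A := by
    have h2 := hmono hrA
    rwa [show Φ (algebraMap ℝ (H →L[ℂ] H) r) = algebraMap ℝ (H →L[ℂ] H) r from by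
      rw [Algebra.algebraMap_eq_smul_one, myPhi_smul, hΦ1]] at h2
  have hΦAu : IsUnit (Φ A) := CStarAlgebra.isUnit_of_le _ hrΦ
    (((isUnit_iff_ne_zero.mpr hr.ne').map (algebraMap ℝ (H →L[ℂ] H))).isStrictlyPositive
    (by rw [Algebra.algebraMap_eq_smul_one]; exact smul_nonneg hr.le zero_le_one))
  have hsΦA : (0 : ℝ≥0) ∉ spectrum ℝ≥0 (Φ A) := spectrum.zero_notMem ℝ≥0 hΦAu
  have hPh : (0 : H →L[ℂ] H) ≤ (Φ A) ^ ((1:ℝ)/2) := CFC.rpow_nonneg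
  have hPm : (0 : H →L[ℂ] H) ≤ (Φ A) ^ (-(1/2) : ℝ) := CFC.rpow_nonneg
  have hsaPh : IsSelfAdjoint ((Φ A) ^ ((1:ℝ)/2)) := .of_nonneg hPh
  have hsaPm : IsSelfAdjoint ((Φ A) ^ (-(1/2) : ℝ)) := .of_nonneg hPm
  have hhm' : (Φ A) ^ ((1:ℝ)/2) * (Φ A) ^ (-(1/2) : ℝ) = 1 := by
    rw [← CFC.rpow_add hΦAu, show (1:ℝ)/2 + (-(1/2):ℝ) = 0 by norm_num, CFC.rpow_zero _ hΦA]
  have hmh' : (Φ A) ^ (-(1/2) : ℝ) * (Φ A) ^ ((1:ℝ)/2) = 1 := by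
    rw [← CFC.rpow_add hΦAu, show (-(1/2):ℝ) + (1:ℝ)/2 = 0 by norm_num, CFC.rpow_zero _ hΦA]
  have hhh' : (Φ A) ^ ((1:ℝ)/2) * (Φ A) ^ ((1:ℝ)/2) = Φ A := by
    rw [← CFC.rpow_add hΦAu, show (1:ℝ)/2 + (1:ℝ)/2 = 1 by norm_num, CFC.rpow_one _ hΦA]
  have hconj1 : (Φ A) ^ (-(1/2) : ℝ) * (Φ A) * (Φ A) ^ (-(1/2) : ℝ) = 1 :=
    CFC.conjugate_rpow_neg_one_half (Φ A) (hΦAu.isStrictlyPositive hΦA)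
  have hΦAB : Φ A ≤ Φ B := hmono hAB
  have hΦBM : Φ B ≤ M • Φ A := by
    have h2 := hmono hBM
    rwa [myPhi_smul] at h2
  have h1D : (1 : H →L[ℂ] H) ≤ (Φ A) ^ (-(1/2) : ℝ) * Φ B * (Φ A) ^ (-(1/2) : ℝ) := by
    have h := IsSelfAdjoint.conjugate_le_conjugate hΦAB hsaPm
    rwa [hconj1] at h
  have hDM : (Φ A) ^ (-(1/2) : ℝ) * Φ B * (Φ A) ^ (-(1/2) : ℝ) ≤ M • 1 := by
    have h := IsSelfAdjoint.conjugate_le_conjugate hΦBM hsaPm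
    rwa [mul_smul_comm, smul_mul_assoc, hconj1] at h
  have hD0 : (0 : H →L[ℂ] H) ≤ (Φ A) ^ (-(1/2) : ℝ) * Φ B * (Φ A) ^ (-(1/2) : ℝ) :=
    zero_le_one.trans h1D
  have hsaD : IsSelfAdjoint ((Φ A) ^ (-(1/2) : ℝ) * Φ B * (Φ A) ^ (-(1/2) : ℝ)) := .of_nonneg hD0
  have hBD : (Φ A) ^ ((1:ℝ)/2) * ((Φ A) ^ (-(1/2) : ℝ) * Φ B * (Φ A) ^ (-(1/2) : ℝ))
      * (Φ A) ^ ((1:ℝ)/2) = Φ B := by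
    have e1 : (Φ A) ^ ((1:ℝ)/2) * ((Φ A) ^ (-(1/2) : ℝ) * Φ B * (Φ A) ^ (-(1/2) : ℝ))
        * (Φ A) ^ ((1:ℝ)/2)
        = ((Φ A) ^ ((1:ℝ)/2) * (Φ A) ^ (-(1/2) : ℝ)) * Φ B
          * ((Φ A) ^ (-(1/2) : ℝ) * (Φ A) ^ ((1:ℝ)/2)) := by
      simp only [mul_assoc]
    rw [e1, hhm', hmh', one_mul, mul_one]
  have hspecD : ∀ x ∈ spectrum ℝ ((Φ A) ^ (-(1/2) : ℝ) * Φ B * (Φ A) ^ (-(1/2) : ℝ)),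
      1 ≤ x ∧ x ≤ M := by
    intro x hx
    constructor
    · exact (algebraMap_le_iff_le_spectrum hsaD).mp (by simpa using h1D) x hx
    · exact (le_algebraMap_iff_spectrum_le hsaD).mp
        (by rw [Algebra.algebraMap_eq_smul_one]; exact hDM) x hx
  have hDp : (1 - β - c) • 1 + (β + c) • ((Φ A) ^ (-(1/2) : ℝ) * Φ B * (Φ A) ^ (-(1/2) : ℝ))
      ≤ ((Φ A) ^ (-(1/2) : ℝ) * Φ B * (Φ A) ^ (-(1/2) : ℝ)) ^ p := by
    rw [myrpow_eq_real_cfc _ p hD0, ← mycfc_affine (1-β-c) (β+c) _ hsaD]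
    refine cfc_mono (fun x hx => ?_) ?_ ?_
    · obtain ⟨h1, h2⟩ := hspecD x hx
      have hls := lower_scalar hp1 hp2.le hm hm1 h1M h1 h2
      rw [← hβdef, ← hcdef] at hls
      have e : 1 + β * (x-1) + c * (x-1) = (1-β-c) + (β+c) * x := by ring
      linarith
    · exact (continuous_const.add (continuous_const.mul continuous_id)).continuousOn
    · exact fun x hx => (Real.continuousAt_rpow_const x p
        (Or.inl (by linarith [(hspecD x hx).1]))).continuousWithinAt
  have step2 : (1-β-c) • Φ A + (β+c) • Φ B
      ≤ (Φ A) ^ ((1:ℝ)/2) * ((Φ A) ^ (-(1/2) : ℝ) * Φ B * (Φ A) ^ (-(1/2) : ℝ)) ^ p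
        * (Φ A) ^ ((1:ℝ)/2) := by
    have hconj := IsSelfAdjoint.conjugate_le_conjugate hDp hsaPh
    have e : (Φ A) ^ ((1:ℝ)/2) * ((1-β-c) • 1
        + (β+c) • ((Φ A) ^ (-(1/2) : ℝ) * Φ B * (Φ A) ^ (-(1/2) : ℝ))) * (Φ A) ^ ((1:ℝ)/2)
        = (1-β-c) • Φ A + (β+c) • Φ B := by
      rw [mul_add, add_mul, mul_smul_comm, mul_smul_comm, smul_mul_assoc, smul_mul_assoc,
        mul_one, hhh', hBD]
    rwa [e] at hconj
  refine le_trans ?_ step2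
  have e : c • Φ (B - A) = c • Φ B - c • Φ A := by rw [map_sub, smul_sub]
  have e2 : ((1-β) • Φ A + β • Φ B) + (c • Φ B - c • Φ A) = (1-β-c) • Φ A + (β+c) • Φ B := by
    simp only [sub_smul, add_smul]
    abel
  calc Φ (A ^ ((1:ℝ)/2) * (A ^ (-(1/2) : ℝ) * B * A ^ (-(1/2) : ℝ)) ^ p * A ^ ((1:ℝ)/2))
        + c • Φ (B - A)
      ≤ ((1-β) • Φ A + β • Φ B) + (c • Φ B - c • Φ A) := by
        rw [e]; exact add_le_add_left step1 _
    _ = (1-β-c) • Φ A + (β+c) • Φ B := e2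
end

section
/- Let A, B be positive invertible bounded operators on a complex Hilbert space H such that m·1_H ≤ 1_H ≤ A^(−1/2) B A^(−1/2) ≤ M·1_H for real scalars 0 < m ≤ 1 ≤ M, and let Φ be a unital positive linear map on B(H). Then for every p with 1 ≤ p ≤ 2, Φ(A ♮_p B) ≤ Φ(A) ♮_p Φ(B) + p·(M^(p−1) − m^(p−1))·Φ(B − A). -/
set_option maxHeartbeats 1000000
set_option synthInstance.maxHeartbeats 400000


open scoped NNReal

section AuxScalar

private lemma scalar_lower' {p x : ℝ} (hp : 1 ≤ p) (hx : 0 ≤ x) :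
    1 - p + p * x ≤ x ^ p := by
  have h := one_add_mul_self_le_rpow_one_add (s := x - 1) (by linarith) hp
  have hx1 : 1 + (x - 1) = x := by ring
  rw [hx1] at h
  linarith

private lemma scalar_upper' {p M x : ℝ} (hp : 1 ≤ p) (hx : 1 ≤ x) (hxM : x ≤ M) :
    x ^ p ≤ 1 - p * M ^ (p - 1) + p * M ^ (p - 1) * x := by
  rcases eq_or_lt_of_le hx with rfl | hx1
  · simp [Real.one_rpow]
  · have hcont : ContinuousOn (fun t : ℝ => t ^ p) (Set.Icc 1 x) := by
      intro t ht
      exact (Real.continuousAt_rpow_const t p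
        (Or.inl (by have := ht.1; intro h; simp [h] at this; linarith))).continuousWithinAt
    have hderiv : ∀ t ∈ Set.Ioo (1:ℝ) x, HasDerivAt (fun t : ℝ => t ^ p)
        (p * t ^ (p - 1)) t := fun t ht =>
      Real.hasDerivAt_rpow_const (Or.inr hp)
    obtain ⟨c, hc, hceq⟩ := exists_hasDerivAt_eq_slope (fun t : ℝ => t ^ p)
      (fun t => p * t ^ (p - 1)) hx1 hcont hderiv
    have hc0 : (0:ℝ) < c := lt_trans zero_lt_one hc.1
    have hcM : c ≤ M := le_trans hc.2.le hxM
    have hmono : c ^ (p - 1) ≤ M ^ (p - 1) :=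
      Real.rpow_le_rpow hc0.le hcM (by linarith)
    have h1 : (1:ℝ) ^ p = 1 := Real.one_rpow p
    have hx0 : x - 1 ≠ 0 := by linarith
    rw [h1] at hceq
    have hxp : x ^ p - 1 = p * c ^ (p - 1) * (x - 1) := by
      rw [hceq]; field_simp
    nlinarith [hxp, hmono, mul_le_mul_of_nonneg_left hmono (by linarith : (0:ℝ) ≤ p)]

end AuxScalar

section AuxCFC

variable {A : Type*} [CStarAlgebra A] [PartialOrder A] [StarOrderedRing A]

private lemma rpow_eq_real_cfc' (a : A) (y : ℝ) (ha : 0 ≤ a) :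
    a ^ y = cfc (fun x : ℝ => x ^ y) a := by
  rw [CFC.rpow_def, cfc_nnreal_eq_real _ a ha]
  exact cfc_congr fun x hx => by
    have hx0 : 0 ≤ x := spectrum_nonneg_of_nonneg ha hx
    simp [NNReal.coe_rpow, Real.coe_toNNReal x hx0]

private lemma smul_nonneg_op' {c : ℝ} (hc : 0 ≤ c) {Z : A} (hZ : 0 ≤ Z) : 0 ≤ c • Z := by
  have h := star_left_conjugate_nonneg hZ ((Real.sqrt c : ℝ) • (1 : A))
  have hs : star ((Real.sqrt c : ℝ) • (1 : A)) = (Real.sqrt c : ℝ) • (1 : A) := by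
    simp [star_smul]
  rw [hs] at h
  calc (0:A) ≤ _ := h
    _ = c • Z := by
        rw [smul_mul_assoc, mul_smul_comm, one_mul, mul_one, smul_smul,
          Real.mul_self_sqrt hc]

private lemma smul_le_smul_op' {c d : ℝ} (h : c ≤ d) {Z : A} (hZ : 0 ≤ Z) :
    c • Z ≤ d • Z := by
  have h0 : 0 ≤ (d - c) • Z := smul_nonneg_op' (by linarith) hZ
  calc c • Z ≤ c • Z + (d - c) • Z := le_add_of_nonneg_right h0
    _ = d • Z := by rw [← add_smul]; congr 1; ring

end AuxCFC

variable {H : Type*} [NormedAddCommGroup H] [InnerProductSpace ℂ H] [CompleteSpace H]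

/-- Corollary 2.3 (3): converse of Ando's inequality for `1 ≤ p ≤ 2`. -/
theorem stmt_7 (A B : H →L[ℂ] H) (hA : 0 ≤ A) (hB : 0 ≤ B)
    (hAinv : IsUnit A) (hBinv : IsUnit B)
    (m M : ℝ) (hm : 0 < m) (hm1 : m ≤ 1) (h1M : 1 ≤ M)
    (hlow : m • (1 : H →L[ℂ] H) ≤ 1)
    (hmid : (1 : H →L[ℂ] H) ≤ (A ^ (-(1 : ℝ) / 2)) * B * (A ^ (-(1 : ℝ) / 2)))
    (hup : (A ^ (-(1 : ℝ) / 2)) * B * (A ^ (-(1 : ℝ) / 2)) ≤ M • (1 : H →L[ℂ] H))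
    (Φ : (H →L[ℂ] H) →ₗ[ℂ] (H →L[ℂ] H)) (hΦ1 : Φ 1 = 1)
    (hΦpos : ∀ X : H →L[ℂ] H, 0 ≤ X → 0 ≤ Φ X)
    (p : ℝ) (hp1 : 1 ≤ p) (hp2 : p ≤ 2) :
    Φ (geomMean A B p) ≤ geomMean (Φ A) (Φ B) p + (p * (M ^ (p - 1) - m ^ (p - 1))) • Φ (B - A) := by
  rcases subsingleton_or_nontrivial (H →L[ℂ] H) with hsub | hnt
  · exact le_of_eq (Subsingleton.elim _ _)
  simp only [geomMean]
  set X := A ^ (-(1 : ℝ) / 2) with hXdef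
  set C := X * B * X with hCdef
  set Q := A ^ ((1 : ℝ) / 2) with hQdef
  -- basic facts on `Q`, `X`, `C`
  have hQpos : (0 : H →L[ℂ] H) ≤ Q := CFC.rpow_nonneg
  have hQsa : IsSelfAdjoint Q := .of_nonneg hQpos
  have hAspec : (0 : ℝ≥0) ∉ spectrum ℝ≥0 A := spectrum.zero_notMem ℝ≥0 hAinv
  have hQQ : Q * Q = A := by
    rw [hQdef, ← CFC.rpow_add hAinv]
    norm_num [CFC.rpow_one A hA]
  have hneg : (-(1 : ℝ) / 2) = -((1 : ℝ) / 2) := by norm_num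
  have hQX : Q * X = 1 := by
    rw [hXdef, hneg, hQdef]; exact CFC.rpow_mul_rpow_neg _ (hAinv.isStrictlyPositive hA)
  have hXQ : X * Q = 1 := by
    rw [hXdef, hneg, hQdef]; exact CFC.rpow_neg_mul_rpow _ (hAinv.isStrictlyPositive hA)
  have hQCQ : Q * C * Q = B := by
    have h : Q * (X * B * X) * Q = (Q * X) * B * (X * Q) := by noncomm_ring
    rw [hCdef, h, hQX, hXQ, one_mul, mul_one]
  have hC0 : (0 : H →L[ℂ] H) ≤ C := le_trans zero_le_one hmid
  have hCsa : IsSelfAdjoint C := .of_nonneg hC0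
  have hBA : (0 : H →L[ℂ] H) ≤ B - A := by
    have h := star_left_conjugate_le_conjugate hmid Q
    rw [hQsa.star_eq, mul_one, hQQ, hQCQ] at h
    exact sub_nonneg.mpr h
  -- spectrum of `C`
  have hlow' : ∀ x ∈ spectrum ℝ C, 1 ≤ x := by
    rw [← CFC.one_le_iff (R := ℝ) C hCsa]; exact hmid
  have hup' : ∀ x ∈ spectrum ℝ C, x ≤ M := by
    rw [← le_algebraMap_iff_spectrum_le (R := ℝ) hCsa, Algebra.algebraMap_eq_smul_one]
    exact hup
  set k := p * M ^ (p - 1) with hkdef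
  have hM0 : (0:ℝ) < M := lt_of_lt_of_le zero_lt_one h1M
  -- key inequality 1 : C ^ p ≤ (1 - k) + k C
  have key1 : C ^ p ≤ algebraMap ℝ (H →L[ℂ] H) (1 - k) + k • C := by
    have hcont : ContinuousOn (fun x : ℝ => x ^ p) (spectrum ℝ C) := by
      intro t ht
      have h1t := hlow' t ht
      exact (Real.continuousAt_rpow_const t p (Or.inl (by linarith))).continuousWithinAt
    calc C ^ p = cfc (fun x : ℝ => x ^ p) C := rpow_eq_real_cfc' C p hC0
      _ ≤ cfc (fun x : ℝ => (1 - k) + k * x) C := by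
          refine cfc_mono (fun x hx => ?_) hcont (by fun_prop)
          have := scalar_upper' hp1 (hlow' x hx) (hup' x hx)
          rw [hkdef]; linarith
      _ = algebraMap ℝ (H →L[ℂ] H) (1 - k) + k • C := by
          rw [cfc_add C (fun _ => (1 - k)) (fun x => k * x), cfc_const _ C,
            cfc_const_mul_id _ C]
  -- conjugate by `Q`
  have key1' : Q * C ^ p * Q ≤ A + k • (B - A) := by
    have h := star_left_conjugate_le_conjugate key1 Q
    rw [hQsa.star_eq] at h
    have hexp : Q * (algebraMap ℝ (H →L[ℂ] H) (1 - k) + k • C) * Q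
        = (1 - k) • A + k • B := by
      rw [Algebra.algebraMap_eq_smul_one, mul_add, add_mul, mul_smul_comm, smul_mul_assoc,
        mul_smul_comm, smul_mul_assoc, mul_one, hQQ, hQCQ]
    rw [hexp] at h
    have heq : (1 - k) • A + k • B = A + k • (B - A) := by
      rw [sub_smul, one_smul, smul_sub]; abel
    rwa [heq] at h
  -- monotonicity of Φ
  have hΦmono : ∀ P1 P2 : H →L[ℂ] H, P1 ≤ P2 → Φ P1 ≤ Φ P2 := fun P1 P2 h =>
    sub_nonneg.mp (by rw [← map_sub]; exact hΦpos _ (sub_nonneg.mpr h))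
  have hΦBA : 0 ≤ Φ (B - A) := hΦpos _ hBA
  have step1 : Φ (Q * C ^ p * Q) ≤ Φ A + k • Φ (B - A) := by
    have h := hΦmono _ _ key1'
    rwa [map_add, LinearMap.map_smul_of_tower] at h
  -- Φ A is positive and invertible
  have hΦA0 : 0 ≤ Φ A := hΦpos A hA
  have hΦAsa : IsSelfAdjoint (Φ A) := .of_nonneg hΦA0
  have hApos : ∀ x ∈ spectrum ℝ A, 0 < x := fun x hx =>
    lt_of_le_of_ne (spectrum_nonneg_of_nonneg hA hx)
      (fun h0 => spectrum.zero_notMem ℝ hAinv (by rw [h0]; exact hx))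
  obtain ⟨r, hr0, hrA⟩ := (CFC.exists_pos_algebraMap_le_iff (a := A) (.of_nonneg hA)).mpr hApos
  have hrΦA : algebraMap ℝ (H →L[ℂ] H) r ≤ Φ A := by
    have h := hΦmono _ _ hrA
    rwa [Algebra.algebraMap_eq_smul_one, LinearMap.map_smul_of_tower, hΦ1,
      ← Algebra.algebraMap_eq_smul_one] at h
  have hΦAunit : IsUnit (Φ A) := by
    rw [← spectrum.zero_notMem_iff ℝ]
    intro h0
    exact absurd ((algebraMap_le_iff_le_spectrum (R := ℝ) hΦAsa).mp hrΦA 0 h0) (not_le.mpr hr0)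
  -- set up the Φ side
  set X2 := Φ A ^ (-(1 : ℝ) / 2) with hX2def
  set D := X2 * Φ B * X2 with hDdef
  set P := Φ A ^ ((1 : ℝ) / 2) with hPdef
  have hPpos : (0 : H →L[ℂ] H) ≤ P := CFC.rpow_nonneg
  have hPsa : IsSelfAdjoint P := .of_nonneg hPpos
  have hX2sa : IsSelfAdjoint X2 := .of_nonneg CFC.rpow_nonneg
  have hΦAspec : (0 : ℝ≥0) ∉ spectrum ℝ≥0 (Φ A) := spectrum.zero_notMem ℝ≥0 hΦAunit
  have hPP : P * P = Φ A := by
    rw [hPdef, ← CFC.rpow_add hΦAunit]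
    norm_num [CFC.rpow_one (Φ A) hΦA0]
  have hPX2 : P * X2 = 1 := by
    rw [hX2def, hneg, hPdef]; exact CFC.rpow_mul_rpow_neg _ (hΦAunit.isStrictlyPositive hΦA0)
  have hX2P : X2 * P = 1 := by
    rw [hX2def, hneg, hPdef]; exact CFC.rpow_neg_mul_rpow _ (hΦAunit.isStrictlyPositive hΦA0)
  have hPDP : P * D * P = Φ B := by
    have h : P * (X2 * Φ B * X2) * P = (P * X2) * Φ B * (X2 * P) := by noncomm_ring
    rw [hDdef, h, hPX2, hX2P, one_mul, mul_one]
  have hD0 : (0 : H →L[ℂ] H) ≤ D := by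
    have h := star_left_conjugate_nonneg (hΦpos B hB) X2
    rwa [hX2sa.star_eq] at h
  have hDsa : IsSelfAdjoint D := .of_nonneg hD0
  -- key inequality 2 : (1 - p) + p D ≤ D ^ p
  have key2 : algebraMap ℝ (H →L[ℂ] H) (1 - p) + p • D ≤ D ^ p := by
    have hcont : ContinuousOn (fun x : ℝ => x ^ p) (spectrum ℝ D) := by
      intro t ht
      exact (Real.continuousAt_rpow_const t p (Or.inr (by linarith))).continuousWithinAt
    calc algebraMap ℝ (H →L[ℂ] H) (1 - p) + p • D
        = cfc (fun x : ℝ => (1 - p) + p * x) D := by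
          rw [cfc_add D (fun _ => (1 - p)) (fun x => p * x), cfc_const _ D,
            cfc_const_mul_id _ D]
      _ ≤ cfc (fun x : ℝ => x ^ p) D := by
          refine cfc_mono (fun x hx => ?_) (by fun_prop) hcont
          have := scalar_lower' hp1 (spectrum_nonneg_of_nonneg hD0 hx)
          linarith
      _ = D ^ p := (rpow_eq_real_cfc' D p hD0).symm
  -- conjugate by `P`
  have key2' : Φ A + p • Φ (B - A) ≤ P * D ^ p * P := by
    have h := star_left_conjugate_le_conjugate key2 P
    rw [hPsa.star_eq] at h
    have hexp : P * (algebraMap ℝ (H →L[ℂ] H) (1 - p) + p • D) * P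
        = (1 - p) • Φ A + p • Φ B := by
      rw [Algebra.algebraMap_eq_smul_one, mul_add, add_mul, mul_smul_comm, smul_mul_assoc,
        mul_smul_comm, smul_mul_assoc, mul_one, hPP, hPDP]
    rw [hexp] at h
    calc Φ A + p • Φ (B - A) = (1 - p) • Φ A + p • Φ B := by
          rw [map_sub, smul_sub, sub_smul, one_smul]; abel
      _ ≤ P * D ^ p * P := h
  -- combine
  have hcoeff : k ≤ p + p * (M ^ (p - 1) - m ^ (p - 1)) := by
    have hm' : m ^ (p - 1) ≤ 1 := Real.rpow_le_one hm.le hm1 (by linarith)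
    rw [hkdef]
    nlinarith
  calc Φ (Q * C ^ p * Q) ≤ Φ A + k • Φ (B - A) := step1
    _ ≤ Φ A + (p + p * (M ^ (p - 1) - m ^ (p - 1))) • Φ (B - A) :=
        add_le_add_right (smul_le_smul_op' hcoeff hΦBA) _
    _ = (Φ A + p • Φ (B - A)) + (p * (M ^ (p - 1) - m ^ (p - 1))) • Φ (B - A) := by
        rw [add_smul]; abel
    _ ≤ P * D ^ p * P + (p * (M ^ (p - 1) - m ^ (p - 1))) • Φ (B - A) :=
        add_le_add_left key2' _
end

section
/- Let A be a positive invertible bounded operator on a complex Hilbert space H such that m·1_H ≤ 1_H ≤ A ≤ M·1_H for real scalars 0 < m ≤ 1 ≤ M, and let Φ be a unital positive linear map on B(H). Then for every p with 0 < p ≤ 1, Φ(A)^p ≤ Φ(A^p) + p·(m^(p−1) − M^(p−1))·(Φ(A) − 1_H). -/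
open scoped NNReal

-- scalar lemma (lower bound): for `1 ≤ x ≤ M`, `1 + p M^(p-1) (x-1) ≤ x^p`
private lemma scalar_lower {p M : ℝ} (hp1 : 0 < p) (hp2 : p ≤ 1) (hM : 1 ≤ M)
    {x : ℝ} (hx1 : 1 ≤ x) (hxM : x ≤ M) :
    1 + p * M ^ (p - 1) * (x - 1) ≤ x ^ p := by
  set c := p * M ^ (p - 1) with hc
  have key : MonotoneOn (fun t : ℝ => t ^ p - c * t) (Set.Icc 1 M) := by
    apply monotoneOn_of_hasDerivWithinAt_nonneg (convex_Icc 1 M)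
      (f' := fun t => p * t ^ (p - 1) - c)
    · apply ContinuousOn.sub
      · exact continuousOn_id.rpow_const fun t ht => Or.inl (by rintro rfl; exact absurd ht.1 (by norm_num))
      · fun_prop
    · intro t ht
      rw [interior_Icc] at ht
      have h0 : t ≠ 0 := by rintro rfl; exact absurd ht.1 (by norm_num)
      exact ((Real.hasDerivAt_rpow_const (Or.inl h0)).sub
        (by simpa using (hasDerivAt_id t).const_mul c)).hasDerivWithinAt
    · intro t ht
      rw [interior_Icc] at ht
      have h1 : M ^ (p - 1) ≤ t ^ (p - 1) :=
        Real.rpow_le_rpow_of_nonpos (by linarith [ht.1]) ht.2.le (by linarith)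
      have h2 := mul_le_mul_of_nonneg_left h1 hp1.le
      simp only [hc]
      linarith
  have h := key (Set.left_mem_Icc.mpr hM) (⟨hx1, hxM⟩ : x ∈ Set.Icc 1 M) hx1
  simp only [Real.one_rpow, mul_one] at h
  linarith

-- scalar lemma (upper bound): for `0 < m ≤ 1`, `1 ≤ x`: `x^p ≤ 1 + p m^(p-1) (x-1)`
private lemma scalar_upper {p m : ℝ} (hp1 : 0 < p) (hp2 : p ≤ 1) (hm : 0 < m) (hm1 : m ≤ 1)
    {x : ℝ} (hx1 : 1 ≤ x) :
    x ^ p ≤ 1 + p * m ^ (p - 1) * (x - 1) := by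
  have h1 : x ^ p ≤ 1 + p * (x - 1) := by
    have := rpow_one_add_le_one_add_mul_self (s := x - 1) (by linarith) hp1.le hp2
    simpa using this
  have h2 : (1 : ℝ) ≤ m ^ (p - 1) :=
    Real.one_le_rpow_of_pos_of_le_one_of_nonpos hm hm1 (by linarith)
  nlinarith [mul_nonneg (mul_nonneg hp1.le (sub_nonneg.2 h2)) (sub_nonneg.2 hx1)]

set_option maxHeartbeats 1000000 in
/-- Corollary 2.4 (1): `Φ(A)^p ≤ Φ(A^p) + p (m^(p-1) - M^(p-1)) (Φ(A) - 1)` for `0 < p ≤ 1`; operator powers via the continuous functional calculus. -/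
theorem stmt_8 {H : Type*} [NormedAddCommGroup H] [InnerProductSpace ℂ H] [CompleteSpace H]
    (A : H →L[ℂ] H) (hA : 0 ≤ A) (hAinv : IsUnit A)
    (m M : ℝ) (hm : 0 < m) (hm1 : m ≤ 1) (h1M : 1 ≤ M)
    (hlow : m • (1 : H →L[ℂ] H) ≤ 1)
    (hmid : (1 : H →L[ℂ] H) ≤ A)
    (hup : A ≤ M • (1 : H →L[ℂ] H))
    (Φ : (H →L[ℂ] H) →ₗ[ℂ] (H →L[ℂ] H)) (hΦ1 : Φ 1 = 1)
    (hΦpos : ∀ X : H →L[ℂ] H, 0 ≤ X → 0 ≤ Φ X)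
    (p : ℝ) (hp1 : 0 < p) (hp2 : p ≤ 1) :
    Φ A ^ p ≤ Φ (A ^ p) + (p * (m ^ (p - 1) - M ^ (p - 1))) • (Φ A - 1) := by
  have hΦmono : ∀ X Y : H →L[ℂ] H, X ≤ Y → Φ X ≤ Φ Y := fun X Y h => by
    have h2 := hΦpos (Y - X) (sub_nonneg.mpr h)
    rw [map_sub] at h2
    exact sub_nonneg.mp h2
  have hΦrsmul : ∀ (r : ℝ) (X : H →L[ℂ] H), Φ (r • X) = r • Φ X := fun r X => by
    rw [← algebraMap_smul ℂ r X, map_smul, algebraMap_smul]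
  have hAsa : IsSelfAdjoint A := .of_nonneg hA
  have hB : (1 : H →L[ℂ] H) ≤ Φ A := by rw [← hΦ1]; exact hΦmono _ _ hmid
  have hB0 : (0 : H →L[ℂ] H) ≤ Φ A := le_trans zero_le_one hB
  have hBsa : IsSelfAdjoint (Φ A) := .of_nonneg hB0
  have hBM : Φ A ≤ M • 1 := by
    have h3 := hΦmono _ _ hup
    rwa [hΦrsmul, hΦ1] at h3
  -- spectra bounds
  have hspec : ∀ (X : H →L[ℂ] H), IsSelfAdjoint X → (1 : H →L[ℂ] H) ≤ X → X ≤ M • 1 →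
      ∀ x ∈ spectrum ℝ X, 1 ≤ x ∧ x ≤ M := by
    intro X hXsa hX1 hXM x hx
    refine ⟨(CFC.one_le_iff (R := ℝ) X hXsa).mp hX1 x hx, ?_⟩
    exact (le_algebraMap_iff_spectrum_le (R := ℝ) (a := X) hXsa).mp
      (by rwa [Algebra.algebraMap_eq_smul_one]) x hx
  have hspecA := hspec A hAsa hmid hup
  have hspecB := hspec (Φ A) hBsa hB hBM
  -- rpow as a real cfc
  have hrpow : ∀ (X : H →L[ℂ] H), 0 ≤ X → X ^ p = cfc (fun x : ℝ => x ^ p) X := by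
    intro X hX
    rw [CFC.rpow_def (a := X), cfc_nnreal_eq_real _ _ hX]
    refine cfc_congr fun x hx => ?_
    have hx0 : (0 : ℝ) ≤ x := spectrum_nonneg_of_nonneg hX hx
    simp [NNReal.coe_rpow, Real.coe_toNNReal x hx0]
  -- affine functions under cfc
  have haffine : ∀ (c : ℝ) (X : H →L[ℂ] H), IsSelfAdjoint X →
      cfc (fun x : ℝ => 1 + c * (x - 1)) X = 1 + c • (X - 1) := by
    intro c X hXsa
    rw [cfc_const_add (R := ℝ) 1 (fun x => c * (x - 1)) X (by fun_prop) hXsa,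
      cfc_const_mul (R := ℝ) c (fun x => x - 1) X (by fun_prop),
      cfc_sub (R := ℝ) (f := fun x => x) (fun _ => (1 : ℝ)) X,
      cfc_id' ℝ X, cfc_const (1 : ℝ) X hXsa, map_one]
  set c₁ : ℝ := p * m ^ (p - 1) with hc₁
  set c₂ : ℝ := p * M ^ (p - 1) with hc₂
  -- continuity of rpow on the spectra
  have hcont : ∀ (X : H →L[ℂ] H), (∀ x ∈ spectrum ℝ X, 1 ≤ x ∧ x ≤ M) →
      ContinuousOn (fun x : ℝ => x ^ p) (spectrum ℝ X) := by
    intro X hX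
    exact continuousOn_id.rpow_const fun x hx => Or.inl (by have := (hX x hx).1; positivity)
  have step1 : Φ A ^ p ≤ 1 + c₁ • (Φ A - 1) := by
    rw [hrpow (Φ A) hB0, ← haffine c₁ (Φ A) hBsa]
    exact cfc_mono (fun x hx => scalar_upper hp1 hp2 hm hm1 (hspecB x hx).1)
      (hcont _ hspecB) (by fun_prop)
  have step2 : 1 + c₂ • (A - 1) ≤ A ^ p := by
    rw [hrpow A hA, ← haffine c₂ A hAsa]
    exact cfc_mono (fun x hx => scalar_lower hp1 hp2 h1M (hspecA x hx).1 (hspecA x hx).2)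
      (by fun_prop) (hcont _ hspecA)
  have step3 : 1 + c₂ • (Φ A - 1) ≤ Φ (A ^ p) := by
    have h4 := hΦmono _ _ step2
    rwa [map_add, hΦ1, hΦrsmul, map_sub, hΦ1] at h4
  calc Φ A ^ p ≤ 1 + c₁ • (Φ A - 1) := step1
    _ = (1 + c₂ • (Φ A - 1)) + (p * (m ^ (p - 1) - M ^ (p - 1))) • (Φ A - 1) := by
        rw [show p * (m ^ (p - 1) - M ^ (p - 1)) = c₁ - c₂ by rw [hc₁, hc₂]; ring, sub_smul]
        abel
    _ ≤ Φ (A ^ p) + (p * (m ^ (p - 1) - M ^ (p - 1))) • (Φ A - 1) :=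
        add_le_add_left step3 _
end

section
/- Let A be a positive invertible bounded operator on a complex Hilbert space H such that m·1_H ≤ 1_H ≤ A ≤ M·1_H for real scalars 0 < m ≤ 1 ≤ M, and let Φ be a unital positive linear map on B(H). Then for every p with −1 ≤ p < 0, Φ(A)^p ≥ Φ(A^p) + p·(m^(p−1) − M^(p−1))·(Φ(A) − 1_H). -/
open scoped NNReal

-- Bernoulli for nonpositive exponents
lemma bern_aux {t q : ℝ} (ht : 0 < t) (hq : q ≤ 0) : 1 + q * (t - 1) ≤ t ^ q := by
  rw [Real.rpow_def_of_pos ht]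
  have h1 : Real.log t ≤ t - 1 := Real.log_le_sub_one_of_pos ht
  have h2 : Real.log t * q + 1 ≤ Real.exp (Real.log t * q) := Real.add_one_le_exp _
  nlinarith

lemma convexOn_rpow_neg {q : ℝ} (hq : q < 0) :
    ConvexOn ℝ (Set.Ioi (0:ℝ)) fun x : ℝ => x ^ q := by
  have hf : ConvexOn ℝ (Set.Ioi (0:ℝ)) fun x => q * Real.log x := by
    have h : ConvexOn ℝ (Set.Ioi (0:ℝ)) (-fun x => -q • Real.log x) := (strictConcaveOn_log_Ioi.concaveOn.smul (c := -q) (by linarith)).neg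
    convert h using 1
    funext x
    simp only [Pi.neg_apply, smul_eq_mul]
    ring
  have himg : (fun x => q * Real.log x) '' Set.Ioi 0 = Set.univ := by
    ext y
    simp only [Set.mem_image, Set.mem_univ, iff_true, Set.mem_Ioi]
    exact ⟨Real.exp (y / q), Real.exp_pos _, by
      rw [Real.log_exp, mul_div_cancel₀ _ (ne_of_lt hq)]⟩
  have hg : ConvexOn ℝ ((fun x => q * Real.log x) '' Set.Ioi 0) Real.exp := by
    rw [himg]; exact convexOn_exp
  have hmono : MonotoneOn Real.exp ((fun x => q * Real.log x) '' Set.Ioi 0) :=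
    Real.exp_monotone.monotoneOn _
  have hcomp := hg.comp hf hmono
  refine ⟨hcomp.1, fun x hx y hy a b ha hb hab => ?_⟩
  have key : ∀ z : ℝ, z ∈ Set.Ioi (0:ℝ) → z ^ q = (Real.exp ∘ fun x => q * Real.log x) z := by
    intro z hz
    simp only [Function.comp_apply]
    rw [Real.rpow_def_of_pos hz, mul_comm]
  show (a • x + b • y) ^ q ≤ a • x ^ q + b • y ^ q
  rw [key x hx, key y hy, key _ (hcomp.1 hx hy ha hb hab)]
  exact hcomp.2 hx hy ha hb hab

-- chord inequality
lemma chord_aux_s9 {q M t : ℝ} (hq : q < 0) (hM : 1 < M) (ht1 : 1 ≤ t) (htM : t ≤ M) :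
    t ^ q ≤ 1 + (M ^ q - 1) / (M - 1) * (t - 1) := by
  have hM0 : (0:ℝ) < M - 1 := by linarith
  have hconv := convexOn_rpow_neg hq
  have h1mem : (1:ℝ) ∈ Set.Ioi (0:ℝ) := by norm_num
  have hMmem : M ∈ Set.Ioi (0:ℝ) := by simp only [Set.mem_Ioi]; linarith
  have ha : (0:ℝ) ≤ (M - t)/(M-1) := div_nonneg (by linarith) hM0.le
  have hb : (0:ℝ) ≤ (t-1)/(M-1) := div_nonneg (by linarith) hM0.le
  have hab : (M - t)/(M-1) + (t-1)/(M-1) = 1 := by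
    rw [← add_div, show M - t + (t-1) = M - 1 by ring]
    exact div_self hM0.ne'
  have h2 := hconv.2 h1mem hMmem ha hb hab
  simp only [smul_eq_mul, Real.one_rpow] at h2
  have hpt : (M - t)/(M-1) * 1 + (t-1)/(M-1) * M = t := by field_simp; ring
  rw [hpt] at h2
  have heq : (M - t)/(M-1) * 1 + (t-1)/(M-1) * M ^ q
      = 1 + (M ^ q - 1) / (M - 1) * (t - 1) := by field_simp; ring
  linarith

-- key scalar bound : c + c₀ ≤ p
lemma coeff_aux {p m M : ℝ} (hm : 0 < m) (hm1 : m ≤ 1) (hM : 1 < M)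
    (hp1 : -1 ≤ p) (hp2 : p < 0) :
    (M ^ p - 1) / (M - 1) + p * (m ^ (p - 1) - M ^ (p - 1)) ≤ p := by
  have hM0 : (0:ℝ) < M := by linarith
  have hM1 : (0:ℝ) < M - 1 := by linarith
  -- M^p - 1 ≤ p * M^(p-1) * (M-1), from Bernoulli at 1/M
  have hb := bern_aux (t := 1/M) (q := p) (by positivity) hp2.le
  have hMp : (0:ℝ) < M ^ p := Real.rpow_pos_of_pos hM0 _
  have hMp1 : M ^ (p - 1) = M ^ p / M := by
    rw [Real.rpow_sub hM0, Real.rpow_one]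
  have hinv : (1/M : ℝ) ^ p = 1 / M ^ p := by
    rw [one_div, Real.inv_rpow hM0.le, one_div]
  rw [hinv] at hb
  -- hb : 1 + p * (1/M - 1) ≤ 1 / M^p
  have key : M ^ p - 1 ≤ p * M ^ (p-1) * (M - 1) := by
    have e1 : M ^ p * (1 / M ^ p) = 1 := by field_simp
    have e3 : M ^ p * (1 / M) * M = M ^ p := by field_simp
    have h4 := mul_le_mul_of_nonneg_left hb hMp.le
    have e4 : M ^ (p-1) = M ^ p * (1/M) := by rw [hMp1]; ring
    rw [e4]
    nlinarith [h4, e1, e3]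
  have h1 : (M ^ p - 1) / (M - 1) ≤ p * M ^ (p - 1) :=
    (div_le_iff₀ hM1).mpr key
  have hm' : 1 ≤ m ^ (p - 1) :=
    Real.one_le_rpow_of_pos_of_le_one_of_nonpos hm hm1 (by linarith)
  nlinarith [mul_le_mul_of_nonpos_left hm' hp2.le]

set_option maxHeartbeats 1000000 in
/-- Corollary 2.4 (2): `Φ(A)^p ≥ Φ(A^p) + p (m^(p-1) - M^(p-1)) (Φ(A) - 1)` for `-1 ≤ p < 0`; operator powers via the continuous functional calculus. -/
theorem stmt_9 {H : Type*} [NormedAddCommGroup H] [InnerProductSpace ℂ H] [CompleteSpace H]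
    (A : H →L[ℂ] H) (hA : 0 ≤ A) (hAinv : IsUnit A)
    (m M : ℝ) (hm : 0 < m) (hm1 : m ≤ 1) (h1M : 1 ≤ M)
    (hlow : m • (1 : H →L[ℂ] H) ≤ 1)
    (hmid : (1 : H →L[ℂ] H) ≤ A)
    (hup : A ≤ M • (1 : H →L[ℂ] H))
    (Φ : (H →L[ℂ] H) →ₗ[ℂ] (H →L[ℂ] H)) (hΦ1 : Φ 1 = 1)
    (hΦpos : ∀ X : H →L[ℂ] H, 0 ≤ X → 0 ≤ Φ X)
    (p : ℝ) (hp1 : -1 ≤ p) (hp2 : p < 0) :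
    Φ (A ^ p) + (p * (m ^ (p - 1) - M ^ (p - 1))) • (Φ A - 1) ≤ Φ A ^ p := by
  have hAsa : IsSelfAdjoint A := IsSelfAdjoint.of_nonneg hA
  -- monotonicity of Φ
  have hΦmono : ∀ X Y : H →L[ℂ] H, X ≤ Y → Φ X ≤ Φ Y := fun X Y hXY =>
    sub_nonneg.mp (by rw [← map_sub]; exact hΦpos _ (sub_nonneg.mpr hXY))
  have hΦsmul : ∀ (r : ℝ) (X : H →L[ℂ] H), Φ (r • X) = r • Φ X := fun r X => by
    rw [← algebraMap_smul ℂ r X, map_smul, algebraMap_smul]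
  have hB1 : (1 : H →L[ℂ] H) ≤ Φ A := hΦ1 ▸ hΦmono _ _ hmid
  have hBM : Φ A ≤ M • 1 := by
    have h := hΦmono _ _ hup
    rwa [hΦsmul, hΦ1] at h
  have hBnn : (0 : H →L[ℂ] H) ≤ Φ A := hΦpos A hA
  have hBsa : IsSelfAdjoint (Φ A) := IsSelfAdjoint.of_nonneg hBnn
  have hspec : ∀ (X : H →L[ℂ] H), IsSelfAdjoint X → (1 : H →L[ℂ] H) ≤ X →
      X ≤ M • 1 → ∀ x ∈ spectrum ℝ X, 1 ≤ x ∧ x ≤ M := by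
    intro X hXsa hX1 hXM x hx
    refine ⟨(CFC.one_le_iff (R := ℝ) X hXsa).mp hX1 x hx, ?_⟩
    have h' : X ≤ algebraMap ℝ (H →L[ℂ] H) M := by
      rwa [Algebra.algebraMap_eq_smul_one]
    exact (le_algebraMap_iff_spectrum_le (R := ℝ) hXsa).mp h' x hx
  have hcfcp : ∀ (X : H →L[ℂ] H), (hXnn : 0 ≤ X) →
      (∀ x ∈ spectrum ℝ X, 1 ≤ x ∧ x ≤ M) → X ^ p = cfc (fun x : ℝ => x ^ p) X := by
    intro X hXnn hXspec
    rw [CFC.rpow_def, cfc_nnreal_eq_real _ _ hXnn]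
    apply cfc_congr
    intro x hx
    have hx1 : 1 ≤ x := (hXspec x hx).1
    simp only [NNReal.coe_rpow, Real.coe_toNNReal x (by linarith : (0:ℝ) ≤ x)]
  have hcontp : ∀ (X : H →L[ℂ] H), (∀ x ∈ spectrum ℝ X, 1 ≤ x ∧ x ≤ M) →
      ContinuousOn (fun x : ℝ => x ^ p) (spectrum ℝ X) := by
    intro X hXspec x hx
    exact (Real.continuousAt_rpow_const x p
      (Or.inl (by have := (hXspec x hx).1; positivity))).continuousWithinAt
  have hspecA := hspec A hAsa hmid hup
  have hspecB := hspec (Φ A) hBsa hB1 hBM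
  rcases eq_or_lt_of_le h1M with hM1 | hM1
  · -- M = 1, so A = 1
    have hA1 : A = 1 := le_antisymm (by rw [← hM1, one_smul] at hup; exact hup) hmid
    rw [hA1, CFC.one_rpow, hΦ1, sub_self, smul_zero, add_zero, CFC.one_rpow]
  · set c : ℝ := (M ^ p - 1) / (M - 1) with hc
    have hchord : A ^ p ≤ c • A + (1 - c) • 1 := by
      rw [hcfcp A hA hspecA]
      calc cfc (fun x : ℝ => x ^ p) A ≤ cfc (fun x : ℝ => c * x + (1 - c)) A := by
            apply cfc_mono ?_ (hcontp A hspecA) (by fun_prop)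
            intro x hx
            obtain ⟨hx1, hxM⟩ := hspecA x hx
            have h := chord_aux_s9 hp2 hM1 hx1 hxM
            rw [hc]; linarith [h]
        _ = c • A + (1 - c) • 1 := by
            rw [cfc_add (a := A) (fun x : ℝ => c * x) (fun _ : ℝ => (1 - c)),
              cfc_const (1 - c) A hAsa, cfc_const_mul c (fun x : ℝ => x) A,
              cfc_id' ℝ (a := A) hAsa, Algebra.algebraMap_eq_smul_one]
    have step2 : Φ (A ^ p) ≤ c • Φ A + (1 - c) • 1 := by
      have h := hΦmono _ _ hchord
      rwa [map_add, hΦsmul, hΦsmul, hΦ1] at h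
    set c₀ : ℝ := p * (m ^ (p - 1) - M ^ (p - 1)) with hc₀
    have step3 : c • Φ A + (1 - c) • 1 + c₀ • (Φ A - 1) ≤ Φ A ^ p := by
      have e2 : c • Φ A + (1 - c) • 1 + c₀ • (Φ A - 1)
          = cfc (fun x : ℝ => (c + c₀) * x + (1 - c - c₀)) (Φ A) := by
        rw [cfc_add (a := Φ A) (fun x : ℝ => (c + c₀) * x) (fun _ : ℝ => (1 - c - c₀)),
          cfc_const (1 - c - c₀) (Φ A) hBsa, cfc_const_mul (c + c₀) (fun x : ℝ => x) (Φ A),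
          cfc_id' ℝ (a := Φ A) hBsa, Algebra.algebraMap_eq_smul_one]
        module
      rw [e2, hcfcp (Φ A) hBnn hspecB]
      apply cfc_mono ?_ (by fun_prop) (hcontp (Φ A) hspecB)
      intro x hx
      obtain ⟨hx1, hxM⟩ := hspecB x hx
      have hb := bern_aux (t := x) (q := p) (by linarith) hp2.le
      have hcc := coeff_aux hm hm1 hM1 hp1 hp2
      have h3 : (c + c₀) * (x - 1) ≤ p * (x - 1) := by
        apply mul_le_mul_of_nonneg_right _ (by linarith)
        rw [hc, hc₀]; exact hcc
      nlinarith [hb, h3]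
    calc Φ (A ^ p) + c₀ • (Φ A - 1) ≤ c • Φ A + (1 - c) • 1 + c₀ • (Φ A - 1) :=
          add_le_add_left step2 _
      _ ≤ Φ A ^ p := step3
end

section
/- Let A be a positive bounded operator on a complex Hilbert space H and let 0 ≤ p ≤ 1. Then A^p ≤ ‖A‖^p·1_H − p·‖A‖^(p−1)·(‖A‖·1_H − A), where ‖A‖ is the operator norm of A (assume A ≠ 0 so that ‖A‖^(p−1) is well defined). -/
open scoped NNReal

/-- Lemma 2.5 (i): for a positive bounded operator `A ≠ 0` and `0 ≤ p ≤ 1`,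
`A^p ≤ ‖A‖^p·1 − p·‖A‖^(p−1)·(‖A‖·1 − A)`, operator powers via the continuous
functional calculus and real powers of `‖A‖` being real powers. -/
theorem stmt_11 {H : Type*} [NormedAddCommGroup H] [InnerProductSpace ℂ H] [CompleteSpace H]
    (A : H →L[ℂ] H) (hA : 0 ≤ A) (hA0 : A ≠ 0) (p : ℝ) (hp0 : 0 ≤ p) (hp1 : p ≤ 1) :
    A ^ p ≤ (‖A‖ ^ p) • (1 : H →L[ℂ] H)
      - (p * ‖A‖ ^ (p - 1)) • (‖A‖ • (1 : H →L[ℂ] H) - A) := by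
  have hsa : IsSelfAdjoint A := .of_nonneg hA
  have hnt : Nontrivial H := by
    by_contra h
    rw [not_nontrivial_iff_subsingleton] at h
    exact hA0 (Subsingleton.elim A 0)
  have hM : (0:ℝ) < ‖A‖ := norm_pos_iff.mpr hA0
  have hcont : Continuous (fun x : ℝ => x ^ p) :=
    continuous_iff_continuousAt.mpr fun x => Real.continuousAt_rpow_const x p (Or.inr hp0)
  have hAp : A ^ p = cfc (fun x : ℝ => x ^ p) A := by
    rw [CFC.rpow_def, cfc_nnreal_eq_real (a := A) (ha := hA)]
    refine cfc_congr fun x hx => ?_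
    have hx0 : 0 ≤ x := spectrum_nonneg_of_nonneg hA hx
    simp [NNReal.coe_rpow, Real.coe_toNNReal x hx0]
  rw [← sub_nonneg]
  set c : ℝ := p * ‖A‖ ^ (p - 1) with hc
  have key : (‖A‖ ^ p) • (1 : H →L[ℂ] H) - c • (‖A‖ • (1 : H →L[ℂ] H) - A) - A ^ p
      = cfc (fun x : ℝ => ‖A‖ ^ p - c * (‖A‖ - x) - x ^ p) A := by
    rw [cfc_sub (fun x : ℝ => ‖A‖ ^ p - c * (‖A‖ - x)) (fun x : ℝ => x ^ p) A (by fun_prop)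
          hcont.continuousOn,
        cfc_sub (fun _ : ℝ => ‖A‖ ^ p) (fun x : ℝ => c * (‖A‖ - x)) A (by fun_prop) (by fun_prop),
        cfc_const_mul c (fun x : ℝ => ‖A‖ - x) A (by fun_prop),
        cfc_sub (fun _ : ℝ => ‖A‖) (fun x : ℝ => x) A (by fun_prop) (by fun_prop),
        cfc_const _ A hsa, cfc_const _ A hsa, cfc_id' ℝ A hsa, hAp,
        Algebra.algebraMap_eq_smul_one, Algebra.algebraMap_eq_smul_one]
  rw [key]
  apply cfc_nonneg
  intro x hx
  have hx0 : 0 ≤ x := spectrum_nonneg_of_nonneg hA hx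
  have hxM : x ≤ ‖A‖ := (Real.le_norm_self x).trans (spectrum.norm_le_norm_of_mem hx)
  have hdiv : 0 ≤ x / ‖A‖ := div_nonneg hx0 hM.le
  have hb := rpow_one_add_le_one_add_mul_self
    (by linarith : (-1:ℝ) ≤ x / ‖A‖ - 1) hp0 hp1
  have h1 : (1 + (x / ‖A‖ - 1)) = x / ‖A‖ := by ring
  rw [h1] at hb
  have hxp : x ^ p = ‖A‖ ^ p * (x / ‖A‖) ^ p := by
    rw [Real.div_rpow hx0 hM.le, mul_div_cancel₀]
    exact (Real.rpow_pos_of_pos hM p).ne'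
  have h2 : x ^ p ≤ ‖A‖ ^ p * (1 + p * (x / ‖A‖ - 1)) := by
    rw [hxp]
    exact mul_le_mul_of_nonneg_left hb (Real.rpow_nonneg hM.le p)
  have hpow : ‖A‖ ^ (p - 1) = ‖A‖ ^ p / ‖A‖ := by
    rw [Real.rpow_sub hM, Real.rpow_one]
  have h3 : ‖A‖ ^ p * (1 + p * (x / ‖A‖ - 1)) = ‖A‖ ^ p - c * (‖A‖ - x) := by
    rw [hc, hpow]
    field_simp
    ring
  linarith [h2.trans_eq h3]
end

section
/- Let A, B be positive invertible bounded operators on a complex Hilbert space H such that ‖A‖·1_H ≤ B. Then for every p with p ≥ 1 or p ≤ 0, B^p − A^p ≤ p·‖B‖^(p−1)·(B − A). -/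
open scoped NNReal


lemma key_scalar {x y M p : ℝ} (hx : 0 < x) (hxy : x ≤ y) (hyM : y ≤ M)
    (hp : 1 ≤ p ∨ p ≤ 0) : y ^ p - x ^ p ≤ p * M ^ (p - 1) * (y - x) := by
  rcases eq_or_lt_of_le hxy with rfl | hlt
  · simp
  have hcont : ContinuousOn (fun t : ℝ => t ^ p) (Set.Icc x y) := by
    intro t ht
    exact (Real.continuousAt_rpow_const t p (Or.inl (hx.trans_le ht.1).ne')).continuousWithinAt
  have hderiv : ∀ t ∈ Set.Ioo x y, HasDerivAt (fun t : ℝ => t ^ p) (p * t ^ (p - 1)) t := by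
    intro t ht
    simpa [mul_comm] using Real.hasDerivAt_rpow_const (Or.inl (hx.trans ht.1).ne')
  obtain ⟨ξ, hξ, hslope⟩ := exists_hasDerivAt_eq_slope (fun t : ℝ => t ^ p)
    (fun t => p * t ^ (p - 1)) hlt hcont hderiv
  have hξpos : 0 < ξ := hx.trans hξ.1
  have hbound : p * ξ ^ (p - 1) ≤ p * M ^ (p - 1) := by
    rcases hp with hp1 | hp0
    · exact mul_le_mul_of_nonneg_left
        (Real.rpow_le_rpow hξpos.le (hξ.2.le.trans hyM) (by linarith)) (by linarith)
    · exact mul_le_mul_of_nonpos_left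
        (Real.rpow_le_rpow_of_nonpos hξpos (hξ.2.le.trans hyM) (by linarith)) hp0
  have hyx : (0:ℝ) < y - x := sub_pos.mpr hlt
  have := hslope ▸ hbound
  calc y ^ p - x ^ p = (y ^ p - x ^ p) / (y - x) * (y - x) := by field_simp
    _ ≤ p * M ^ (p - 1) * (y - x) := mul_le_mul_of_nonneg_right this hyx.le

lemma rpow_eq_cfc_real_s14 {H : Type*} [NormedAddCommGroup H] [InnerProductSpace ℂ H]
    [CompleteSpace H] (X : H →L[ℂ] H) (p : ℝ) (hX : 0 ≤ X) :
    X ^ p = cfc (fun t : ℝ => t ^ p) X := by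
  rw [← CFC.rpow_eq_pow, CFC.rpow]
  refine (cfc_nnreal_eq_real _ X hX).trans ?_
  refine cfc_congr fun t ht => ?_
  have ht0 : 0 ≤ t := spectrum_nonneg_of_nonneg hX ht
  simp [NNReal.coe_rpow, Real.coe_toNNReal t ht0]

lemma cfc_affine {H : Type*} [NormedAddCommGroup H] [InnerProductSpace ℂ H]
    [CompleteSpace H] (X : H →L[ℂ] H) (d c : ℝ) (hX : IsSelfAdjoint X) :
    cfc (fun t : ℝ => d + c * t) X = d • (1 : H →L[ℂ] H) + c • X := by
  rw [cfc_const_add d (fun t => c * t) X, cfc_const_mul_id c X,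
    Algebra.algebraMap_eq_smul_one]

set_option synthInstance.maxHeartbeats 1000000 in
/-- Theorem 2.6 (2): for positive invertible bounded operators `A`, `B` with `‖A‖·1 ≤ B` and
`p ≥ 1` or `p ≤ 0`, `B^p − A^p ≤ p·‖B‖^(p−1)·(B − A)`, operator powers via the continuous
functional calculus. -/
theorem stmt_14 {H : Type*} [NormedAddCommGroup H] [InnerProductSpace ℂ H] [CompleteSpace H]
    (A B : H →L[ℂ] H) (hA : 0 ≤ A) (hB : 0 ≤ B) (hAinv : IsUnit A) (hBinv : IsUnit B)
    (hAB : ‖A‖ • (1 : H →L[ℂ] H) ≤ B) (p : ℝ) (hp : 1 ≤ p ∨ p ≤ 0) :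
    B ^ p - A ^ p ≤ (p * ‖B‖ ^ (p - 1)) • (B - A) := by
  rcases subsingleton_or_nontrivial H with hH | hH
  · exact le_of_eq (Subsingleton.elim _ _)
  have hsaA : IsSelfAdjoint A := .of_nonneg hA
  have hsaB : IsSelfAdjoint B := .of_nonneg hB
  set a := ‖A‖ with ha_def
  set M := ‖B‖ with hM_def
  set c := p * M ^ (p - 1) with hc_def
  haveI : Nontrivial (H →L[ℂ] H) := ⟨1, 0, by
    intro h
    obtain ⟨v, hv⟩ := exists_ne (0 : H)
    exact hv (by simpa using DFunLike.congr_fun h v)⟩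
  have ha_pos : 0 < a := norm_pos_iff.mpr hAinv.ne_zero
  have hBl : ∀ t ∈ spectrum ℝ B, a ≤ t := by
    refine (algebraMap_le_iff_le_spectrum (R := ℝ) hsaB).mp ?_
    rwa [Algebra.algebraMap_eq_smul_one]
  have hBu : ∀ t ∈ spectrum ℝ B, t ≤ M := fun t ht =>
    (le_abs_self t).trans (spectrum.norm_le_norm_of_mem ht)
  have hAu : ∀ t ∈ spectrum ℝ A, t ≤ a := fun t ht =>
    (le_abs_self t).trans (spectrum.norm_le_norm_of_mem ht)
  have hApos : ∀ t ∈ spectrum ℝ A, 0 < t := fun t ht =>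
    lt_of_le_of_ne (spectrum_nonneg_of_nonneg hA ht)
      (fun h0 => (spectrum.zero_notMem_iff ℝ).mpr hAinv (h0 ▸ ht))
  have haM : a ≤ M := hBl M (CStarAlgebra.norm_mem_spectrum_of_nonneg hB)
  have hcontB : ContinuousOn (fun t : ℝ => t ^ p) (spectrum ℝ B) := fun t ht =>
    (Real.continuousAt_rpow_const t p (Or.inl (ha_pos.trans_le (hBl t ht)).ne')).continuousWithinAt
  have hcontA : ContinuousOn (fun t : ℝ => t ^ p) (spectrum ℝ A) := fun t ht =>
    (Real.continuousAt_rpow_const t p (Or.inl (hApos t ht).ne')).continuousWithinAt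
  have h1 : B ^ p ≤ cfc (fun t : ℝ => (a ^ p - c * a) + c * t) B := by
    rw [rpow_eq_cfc_real_s14 B p hB]
    refine cfc_mono (fun t ht => ?_) hcontB (by fun_prop)
    have hk := key_scalar ha_pos (hBl t ht) (hBu t ht) hp
    rw [← hc_def] at hk
    have := mul_sub c t a
    linarith
  have h2 : cfc (fun t : ℝ => (a ^ p - c * a) + c * t) A ≤ A ^ p := by
    rw [rpow_eq_cfc_real_s14 A p hA]
    refine cfc_mono (fun t ht => ?_) (by fun_prop) hcontA
    have hk := key_scalar (hApos t ht) (hAu t ht) haM hp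
    rw [← hc_def] at hk
    have := mul_sub c a t
    linarith
  calc B ^ p - A ^ p ≤ cfc (fun t : ℝ => (a ^ p - c * a) + c * t) B -
      cfc (fun t : ℝ => (a ^ p - c * a) + c * t) A := sub_le_sub h1 h2
    _ = c • (B - A) := by
        rw [cfc_affine B _ _ hsaB, cfc_affine A _ _ hsaA, smul_sub]
        abel
end

section
/- Let A be a positive bounded operator on a complex Hilbert space H with m·1_H ≤ A ≤ M·1_H for real scalars 0 < m ≤ M, and let x ∈ H be a unit vector. Then for every p with 0 < p < 1: (p/M^(1−p))·(⟨Ax, x⟩ − ⟨A^p x, x⟩^(1/p)) ≤ ⟨Ax, x⟩^p − ⟨A^p x, x⟩ ≤ (p/m^(1−p))·(⟨Ax, x⟩ − ⟨A^p x, x⟩^(1/p)). -/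
open scoped NNReal


section aux
variable {H : Type*} [NormedAddCommGroup H] [InnerProductSpace ℂ H] [CompleteSpace H]

lemma aux_inner_mono (X Y : H →L[ℂ] H) (h : X ≤ Y) (x : H) :
    (inner ℂ (X x) x : ℂ).re ≤ (inner ℂ (Y x) x : ℂ).re := by
  rw [ContinuousLinearMap.le_def] at h
  have := h.2 x
  simp [ContinuousLinearMap.reApplyInnerSelf, ContinuousLinearMap.sub_apply, inner_sub_left] at this
  linarith

lemma aux_const_inner (c : ℝ) (x : H) (hx : ‖x‖ = 1) :
    (inner ℂ ((c • (1 : H →L[ℂ] H)) x) x : ℂ).re = c := by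
  rw [ContinuousLinearMap.smul_apply, ContinuousLinearMap.one_apply, ← Complex.coe_smul,
    inner_smul_left]
  rw [Complex.conj_ofReal, Complex.re_ofReal_mul]
  have : (inner ℂ x x : ℂ).re = 1 := by
    rw [← RCLike.re_to_complex, inner_self_eq_norm_sq, hx]; norm_num
  rw [this, mul_one]

lemma aux_affine_cfc_s17 (A : H →L[ℂ] H) (hA : 0 ≤ A) (C c : ℝ) :
    cfc (fun y : ℝ => C + c * y) A = C • (1 : H →L[ℂ] H) + c • A := by
  have hsa : IsSelfAdjoint A := .of_nonneg hA
  rw [cfc_add (a := A) (fun _ => C) (fun y => c * y), cfc_const C A, cfc_const_mul_id c A,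
    Algebra.algebraMap_eq_smul_one]
end aux

lemma scalar_key (p : ℝ) (hp0 : 0 < p) (hp1 : p < 1) (m M a b : ℝ) (hm : 0 < m)
    (hmb : m ≤ b) (hba : b ≤ a) (haM : a ≤ M) :
    p * M ^ (p-1) * (a - b) ≤ a ^ p - b ^ p ∧ a ^ p - b ^ p ≤ p * m ^ (p-1) * (a - b) := by
  have hM : 0 < M := hm.trans_le (hmb.trans (hba.trans haM))
  have key : ∀ K : ℝ, ∀ t ∈ interior (Set.Icc m M),
      HasDerivAt (fun t : ℝ => t ^ p - K * t) (p * t ^ (p-1) - K) t := by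
    intro K t ht
    rw [interior_Icc] at ht
    have h0 : t ≠ 0 := (hm.trans ht.1).ne'
    have h1 := Real.hasDerivAt_rpow_const (x := t) (p := p) (Or.inl h0)
    have h2 := (hasDerivAt_id t).const_mul K
    simpa [mul_comm, Pi.sub_def] using h1.sub h2
  have hcont : ∀ K : ℝ, ContinuousOn (fun t : ℝ => t ^ p - K * t) (Set.Icc m M) := by
    intro K
    apply ContinuousOn.sub ?_ (continuousOn_const.mul continuousOn_id)
    intro t ht
    exact (Real.continuousAt_rpow_const t p (Or.inl (hm.trans_le ht.1).ne')).continuousWithinAt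
  have hmemb : b ∈ Set.Icc m M := ⟨hmb, hba.trans haM⟩
  have hmema : a ∈ Set.Icc m M := ⟨hmb.trans hba, haM⟩
  constructor
  · have hmono : MonotoneOn (fun t : ℝ => t ^ p - (p * M ^ (p-1)) * t) (Set.Icc m M) := by
      apply monotoneOn_of_deriv_nonneg (convex_Icc m M) (hcont _)
      · intro t ht
        exact ((key _ t ht).differentiableAt).differentiableWithinAt
      · intro t ht
        rw [(key _ t ht).deriv]
        rw [interior_Icc] at ht
        have : M ^ (p-1) ≤ t ^ (p-1) :=
          Real.rpow_le_rpow_of_nonpos (hm.trans ht.1) (ht.2.le) (by linarith)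
        nlinarith
    have := hmono hmemb hmema hba
    simp only at this
    linarith
  · have hanti : AntitoneOn (fun t : ℝ => t ^ p - (p * m ^ (p-1)) * t) (Set.Icc m M) := by
      apply antitoneOn_of_deriv_nonpos (convex_Icc m M) (hcont _)
      · intro t ht
        exact ((key _ t ht).differentiableAt).differentiableWithinAt
      · intro t ht
        rw [(key _ t ht).deriv]
        rw [interior_Icc] at ht
        have : t ^ (p-1) ≤ m ^ (p-1) :=
          Real.rpow_le_rpow_of_nonpos hm ht.1.le (by linarith)
        nlinarith
    have := hanti hmemb hmema hba
    simp only at this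
    linarith

lemma scalar_tangent (p : ℝ) (hp0 : 0 < p) (hp1 : p < 1) (s y : ℝ) (hs : 0 < s) (hy : 0 < y) :
    y ^ p ≤ (1 - p) * s ^ p + p * s ^ (p-1) * y := by
  have hss : s ^ (p-1) * s = s ^ p := by
    rw [Real.rpow_sub hs, Real.rpow_one, div_mul_cancel₀ _ hs.ne']
  rcases le_total y s with h | h
  · have := (scalar_key p hp0 hp1 y s s y hy le_rfl h le_rfl).1
    nlinarith
  · have := (scalar_key p hp0 hp1 s y y s hs le_rfl h le_rfl).2
    nlinarith


/-- Proposition 3.2 (1): a reverse and an improvement of the Hölder–McCarthy inequality for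
`0 < p < 1`:
`(p/M^(1−p))·(⟨Ax,x⟩ − ⟨Aᵖx,x⟩^(1/p)) ≤ ⟨Ax,x⟩ᵖ − ⟨Aᵖx,x⟩ ≤ (p/m^(1−p))·(⟨Ax,x⟩ − ⟨Aᵖx,x⟩^(1/p))`,
operator powers via the continuous functional calculus and scalar powers being real powers. -/
theorem stmt_17 {H : Type*} [NormedAddCommGroup H] [InnerProductSpace ℂ H] [CompleteSpace H]
    (A : H →L[ℂ] H) (hA : 0 ≤ A) (m M : ℝ) (hm : 0 < m) (hmM : m ≤ M)
    (h1 : m • (1 : H →L[ℂ] H) ≤ A) (h2 : A ≤ M • (1 : H →L[ℂ] H))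
    (x : H) (hx : ‖x‖ = 1) (p : ℝ) (hp0 : 0 < p) (hp1 : p < 1) :
    (p / M ^ (1 - p)) * ((inner ℂ (A x) x : ℂ).re - ((inner ℂ ((A ^ p) x) x : ℂ).re) ^ (1 / p))
        ≤ ((inner ℂ (A x) x : ℂ).re) ^ p - (inner ℂ ((A ^ p) x) x : ℂ).re ∧
      ((inner ℂ (A x) x : ℂ).re) ^ p - (inner ℂ ((A ^ p) x) x : ℂ).re
        ≤ (p / m ^ (1 - p)) *
            ((inner ℂ (A x) x : ℂ).re - ((inner ℂ ((A ^ p) x) x : ℂ).re) ^ (1 / p)) := by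
  have hsa : IsSelfAdjoint A := .of_nonneg hA
  have hM : 0 < M := hm.trans_le hmM
  have hspec_lo : ∀ y ∈ spectrum ℝ A, m ≤ y := by
    rw [← Algebra.algebraMap_eq_smul_one, algebraMap_le_iff_le_spectrum] at h1; exact h1
  have hspec_hi : ∀ y ∈ spectrum ℝ A, y ≤ M := by
    rw [← Algebra.algebraMap_eq_smul_one, le_algebraMap_iff_spectrum_le] at h2; exact h2
  set t1 := (inner ℂ (A x) x : ℂ).re with ht1def
  set t2 := (inner ℂ ((A ^ p) x) x : ℂ).re with ht2def
  have ht1m : m ≤ t1 := by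
    have := aux_inner_mono _ _ h1 x
    rwa [aux_const_inner m x hx] at this
  have ht1M : t1 ≤ M := by
    have := aux_inner_mono _ _ h2 x
    rwa [aux_const_inner M x hx] at this
  have ht1pos : 0 < t1 := hm.trans_le ht1m
  -- A ^ p as real cfc
  have hApcfc : A ^ p = cfc (fun y : ℝ => y ^ p) A := by
    rw [CFC.rpow_def, cfc_nnreal_eq_real _ A hA]
    apply cfc_congr
    intro y hy
    have h0 : 0 ≤ y := hm.le.trans (hspec_lo y hy)
    simp [NNReal.coe_rpow, Real.coe_toNNReal y h0]
  have hcontp : ContinuousOn (fun y : ℝ => y ^ p) (spectrum ℝ A) :=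
    fun t _ => (Real.continuousAt_rpow_const t p (Or.inr hp0.le)).continuousWithinAt
  -- lower bound on A ^ p
  have h3 : (m ^ p) • (1 : H →L[ℂ] H) ≤ A ^ p := by
    rw [hApcfc, ← Algebra.algebraMap_eq_smul_one,
      algebraMap_le_cfc_iff (fun y : ℝ => y ^ p) (m ^ p) A hcontp hsa]
    exact fun y hy => Real.rpow_le_rpow hm.le (hspec_lo y hy) hp0.le
  have ht2m : m ^ p ≤ t2 := by
    have := aux_inner_mono _ _ h3 x
    rwa [aux_const_inner (m ^ p) x hx] at this
  -- tangent line upper bound on A ^ p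
  have h4 : A ^ p ≤ ((1 - p) * t1 ^ p) • (1 : H →L[ℂ] H) + (p * t1 ^ (p-1)) • A := by
    rw [hApcfc, ← aux_affine_cfc_s17 A hA ((1 - p) * t1 ^ p) (p * t1 ^ (p-1))]
    rw [cfc_le_iff (fun y : ℝ => y ^ p) _ A hcontp (by fun_prop) hsa]
    intro y hy
    exact scalar_tangent p hp0 hp1 t1 y ht1pos (hm.trans_le (hspec_lo y hy))
  have ht2ub : t2 ≤ t1 ^ p := by
    have h5 := aux_inner_mono _ _ h4 x
    rw [ContinuousLinearMap.add_apply, inner_add_left] at h5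
    rw [Complex.add_re, aux_const_inner _ x hx] at h5
    have h6 : (inner ℂ (((p * t1 ^ (p-1)) • A) x) x : ℂ).re = p * t1 ^ (p-1) * t1 := by
      rw [ContinuousLinearMap.smul_apply, ← Complex.coe_smul, inner_smul_left,
        Complex.conj_ofReal, Complex.re_ofReal_mul]
    rw [h6] at h5
    have hss : t1 ^ (p-1) * t1 = t1 ^ p := by
      rw [Real.rpow_sub ht1pos, Real.rpow_one, div_mul_cancel₀ _ ht1pos.ne']
    nlinarith
  -- scalar endgame
  set b := t2 ^ (1/p) with hbdef
  have ht2pos : 0 < t2 := lt_of_lt_of_le (Real.rpow_pos_of_pos hm p) ht2m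
  have hb_pow : b ^ p = t2 := by
    rw [hbdef, ← Real.rpow_mul ht2pos.le, one_div, inv_mul_cancel₀ hp0.ne', Real.rpow_one]
  have hmb : m ≤ b := by
    have h7 : (m ^ p) ^ (1/p) ≤ t2 ^ (1/p) :=
      Real.rpow_le_rpow (Real.rpow_pos_of_pos hm p).le ht2m (by positivity)
    rwa [← Real.rpow_mul hm.le, mul_one_div, div_self hp0.ne', Real.rpow_one] at h7
  have hba : b ≤ t1 := by
    have h7 : t2 ^ (1/p) ≤ (t1 ^ p) ^ (1/p) :=
      Real.rpow_le_rpow ht2pos.le ht2ub (by positivity)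
    rwa [← Real.rpow_mul ht1pos.le, mul_one_div, div_self hp0.ne', Real.rpow_one] at h7
  obtain ⟨L, U⟩ := scalar_key p hp0 hp1 m M t1 b hm hmb hba ht1M
  have hcM : p / M ^ (1-p) = p * M ^ (p-1) := by
    rw [show p - 1 = -(1-p) by ring, Real.rpow_neg hM.le, div_eq_mul_inv]
  have hcm : p / m ^ (1-p) = p * m ^ (p-1) := by
    rw [show p - 1 = -(1-p) by ring, Real.rpow_neg hm.le, div_eq_mul_inv]
  rw [hcM, hcm]
  constructor
  · linarith
  · linarith
end
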